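/- There exists an edge-to-edge tiling of ℝ² by isometric copies of the isosceles right triangle T₀ with legs of length 1, each tile of the form z + R(T₀) with R a rotation by an integer multiple of π/2 and z ∈ ℝ² (four orientations, no reflections), with the following two properties: (1) the tiling has no nonzero translation period; (2) every finite patch recurs infinitely often, i.e., for every finite subfamily P of the tiling, the set of vectors v ∈ ℝ² such that {v + A : A ∈ P} is again a subfamily of the tiling is infinite. -/

import Mathlib

/-- Rotation of the plane about the origin by `k` quarter turns (angle `k·π/2`). -/
noncomputable def rotk (k : ℤ) : ℝ × ℝ → ℝ × ℝ := fun p =>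
  (Real.cos (k * (Real.pi / 2)) * p.1 - Real.sin (k * (Real.pi / 2)) * p.2,
   Real.sin (k * (Real.pi / 2)) * p.1 + Real.cos (k * (Real.pi / 2)) * p.2)

/-- The closed isosceles right triangle with vertices (0,0), (1,0), (0,1). -/
def T0 : Set (ℝ × ℝ) := {p | 0 ≤ p.1 ∧ 0 ≤ p.2 ∧ p.1 + p.2 ≤ 1}

/-- The tile `z + R(T₀)` where `R` is rotation by `k·π/2`. -/
noncomputable def tile (k : ℤ) (z : ℝ × ℝ) : Set (ℝ × ℝ) :=
  (fun p => z + rotk k p) '' T0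

/-- Translate a subset of the plane by the vector `v`. -/
def translateSet (v : ℝ × ℝ) (A : Set (ℝ × ℝ)) : Set (ℝ × ℝ) :=
  (fun x => v + x) '' A

/-- `v` is a translation period of the family `F`: `{v + A : A ∈ F} = F`. -/
def IsPeriod (v : ℝ × ℝ) (F : Set (Set (ℝ × ℝ))) : Prop :=
  translateSet v '' F = F

/-- `p` is a vertex of the tile `A` (a rotated translate of `T₀`). -/
noncomputable def IsVertexOf (p : ℝ × ℝ) (A : Set (ℝ × ℝ)) : Prop :=
  ∃ k : ℤ, ∃ z : ℝ × ℝ, A = tile k z ∧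
    (p = z + rotk k (0, 0) ∨ p = z + rotk k (1, 0) ∨ p = z + rotk k (0, 1))

/-- `e` is a (closed) edge of the tile `A` (a rotated translate of `T₀`). -/
noncomputable def IsEdgeOf (e : Set (ℝ × ℝ)) (A : Set (ℝ × ℝ)) : Prop :=
  ∃ k : ℤ, ∃ z : ℝ × ℝ, A = tile k z ∧
    (e = segment ℝ (z + rotk k (0, 0)) (z + rotk k (1, 0)) ∨
     e = segment ℝ (z + rotk k (0, 0)) (z + rotk k (0, 1)) ∨
     e = segment ℝ (z + rotk k (1, 0)) (z + rotk k (0, 1)))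

/-- A family of triangular tiles is edge-to-edge if any two distinct tiles meet
in nothing, in a single common vertex, or in a full common edge. -/
noncomputable def EdgeToEdge (F : Set (Set (ℝ × ℝ))) : Prop :=
  ∀ A ∈ F, ∀ B ∈ F, A ≠ B →
    A ∩ B = ∅ ∨
    (∃ p, IsVertexOf p A ∧ IsVertexOf p B ∧ A ∩ B = {p}) ∨
    (∃ e, IsEdgeOf e A ∧ IsEdgeOf e B ∧ A ∩ B = e)

lemma rotk_zero (p : ℝ × ℝ) : rotk 0 p = p := by
  simp [rotk]

lemma rotk_one (p : ℝ × ℝ) : rotk 1 p = (-p.2, p.1) := by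
  simp [rotk]

lemma rotk_two (p : ℝ × ℝ) : rotk 2 p = (-p.1, -p.2) := by
  unfold rotk
  rw [show ((2:ℤ):ℝ) * (Real.pi/2) = Real.pi by push_cast; ring]
  simp

lemma rotk_three (p : ℝ × ℝ) : rotk 3 p = (p.2, -p.1) := by
  unfold rotk
  rw [show ((3:ℤ):ℝ) * (Real.pi/2) = Real.pi + Real.pi/2 by push_cast; ring,
    Real.cos_add, Real.sin_add]
  simp

lemma mem_tile0 {p : ℝ × ℝ} {z : ℝ × ℝ} :
    p ∈ tile 0 z ↔ z.1 ≤ p.1 ∧ z.2 ≤ p.2 ∧ p.1 + p.2 ≤ z.1 + z.2 + 1 := by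
  constructor
  · rintro ⟨q, hq, rfl⟩
    simp only [rotk_zero]
    obtain ⟨h1, h2, h3⟩ := hq
    refine ⟨by simpa using h1, by simpa using h2, ?_⟩
    simp only [Prod.fst_add, Prod.snd_add]; linarith
  · rintro ⟨h1, h2, h3⟩
    exact ⟨(p.1 - z.1, p.2 - z.2), ⟨by simpa using h1, by simpa using h2, by simp; linarith⟩,
      by simp only [rotk_zero]; ext <;> simp⟩

lemma mem_tile1 {p : ℝ × ℝ} {z : ℝ × ℝ} :
    p ∈ tile 1 z ↔ p.1 ≤ z.1 ∧ z.2 ≤ p.2 ∧ p.2 - p.1 ≤ z.2 - z.1 + 1 := by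
  constructor
  · rintro ⟨q, hq, rfl⟩
    simp only [rotk_one]
    obtain ⟨h1, h2, h3⟩ := hq
    simp only [Prod.fst_add, Prod.snd_add]
    constructor; · simp; linarith
    constructor; · simp; linarith
    · simp; linarith
  · rintro ⟨h1, h2, h3⟩
    refine ⟨(p.2 - z.2, z.1 - p.1), ⟨by simp; linarith, by simp; linarith, by simp; linarith⟩, ?_⟩
    simp only [rotk_one]; ext <;> simp

lemma mem_tile2 {p : ℝ × ℝ} {z : ℝ × ℝ} :
    p ∈ tile 2 z ↔ p.1 ≤ z.1 ∧ p.2 ≤ z.2 ∧ z.1 + z.2 - 1 ≤ p.1 + p.2 := by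
  constructor
  · rintro ⟨q, hq, rfl⟩
    simp only [rotk_two]
    obtain ⟨h1, h2, h3⟩ := hq
    simp only [Prod.fst_add, Prod.snd_add]
    constructor; · simp; linarith
    constructor; · simp; linarith
    · simp; linarith
  · rintro ⟨h1, h2, h3⟩
    refine ⟨(z.1 - p.1, z.2 - p.2), ⟨by simp; linarith, by simp; linarith, by simp; linarith⟩, ?_⟩
    simp only [rotk_two]; ext <;> simp

lemma mem_tile3 {p : ℝ × ℝ} {z : ℝ × ℝ} :
    p ∈ tile 3 z ↔ z.1 ≤ p.1 ∧ p.2 ≤ z.2 ∧ p.1 - p.2 ≤ z.1 - z.2 + 1 := by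
  constructor
  · rintro ⟨q, hq, rfl⟩
    simp only [rotk_three]
    obtain ⟨h1, h2, h3⟩ := hq
    simp only [Prod.fst_add, Prod.snd_add]
    constructor; · simp; linarith
    constructor; · simp; linarith
    · simp; linarith
  · rintro ⟨h1, h2, h3⟩
    refine ⟨(z.2 - p.2, p.1 - z.1), ⟨by simp; linarith, by simp; linarith, by simp; linarith⟩, ?_⟩
    simp only [rotk_three]; ext <;> simp

noncomputable def tA (a b : ℝ) : Set (ℝ × ℝ) := tile 0 (a, b)
noncomputable def tB (a b : ℝ) : Set (ℝ × ℝ) := tile 1 (a+1, b)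
noncomputable def tC (a b : ℝ) : Set (ℝ × ℝ) := tile 2 (a+1, b+1)
noncomputable def tD (a b : ℝ) : Set (ℝ × ℝ) := tile 3 (a, b+1)

lemma mem_tA {p : ℝ × ℝ} {a b : ℝ} :
    p ∈ tA a b ↔ a ≤ p.1 ∧ b ≤ p.2 ∧ p.1 + p.2 ≤ a + b + 1 := by
  rw [tA, mem_tile0]
lemma mem_tB {p : ℝ × ℝ} {a b : ℝ} :
    p ∈ tB a b ↔ p.1 ≤ a + 1 ∧ b ≤ p.2 ∧ p.2 - p.1 ≤ b - a := by
  rw [tB, mem_tile1]; dsimp only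
  constructor <;> (rintro ⟨h1,h2,h3⟩; exact ⟨by linarith, by linarith, by linarith⟩)
lemma mem_tC {p : ℝ × ℝ} {a b : ℝ} :
    p ∈ tC a b ↔ p.1 ≤ a + 1 ∧ p.2 ≤ b + 1 ∧ a + b + 1 ≤ p.1 + p.2 := by
  rw [tC, mem_tile2]; dsimp only
  constructor <;> (rintro ⟨h1,h2,h3⟩; exact ⟨by linarith, by linarith, by linarith⟩)
lemma mem_tD {p : ℝ × ℝ} {a b : ℝ} :
    p ∈ tD a b ↔ a ≤ p.1 ∧ p.2 ≤ b + 1 ∧ p.1 - p.2 ≤ a - b := by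
  rw [tD, mem_tile3]; dsimp only
  constructor <;> (rintro ⟨h1,h2,h3⟩; exact ⟨by linarith, by linarith, by linarith⟩)

/-- The four possible tile types over the square `[a,a+1] × [b,b+1]`. -/
def IsT (A : Set (ℝ × ℝ)) (a b : ℝ) : Prop :=
  A = tA a b ∨ A = tB a b ∨ A = tC a b ∨ A = tD a b

lemma sq_of_mem {A : Set (ℝ × ℝ)} {a b : ℝ} (h : IsT A a b) {p : ℝ × ℝ} (hp : p ∈ A) :
    a ≤ p.1 ∧ p.1 ≤ a + 1 ∧ b ≤ p.2 ∧ p.2 ≤ b + 1 := by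
  rcases h with rfl | rfl | rfl | rfl
  · rw [mem_tA] at hp
    exact ⟨by linarith [hp.1, hp.2.1, hp.2.2], by linarith [hp.1, hp.2.1, hp.2.2],
      by linarith [hp.1, hp.2.1, hp.2.2], by linarith [hp.1, hp.2.1, hp.2.2]⟩
  · rw [mem_tB] at hp
    exact ⟨by linarith [hp.1, hp.2.1, hp.2.2], by linarith [hp.1, hp.2.1, hp.2.2],
      by linarith [hp.1, hp.2.1, hp.2.2], by linarith [hp.1, hp.2.1, hp.2.2]⟩
  · rw [mem_tC] at hp
    exact ⟨by linarith [hp.1, hp.2.1, hp.2.2], by linarith [hp.1, hp.2.1, hp.2.2],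
      by linarith [hp.1, hp.2.1, hp.2.2], by linarith [hp.1, hp.2.1, hp.2.2]⟩
  · rw [mem_tD] at hp
    exact ⟨by linarith [hp.1, hp.2.1, hp.2.2], by linarith [hp.1, hp.2.1, hp.2.2],
      by linarith [hp.1, hp.2.1, hp.2.2], by linarith [hp.1, hp.2.1, hp.2.2]⟩

lemma translate_tile (v : ℝ × ℝ) (k : ℤ) (z : ℝ × ℝ) :
    translateSet v (tile k z) = tile k (v + z) := by
  unfold translateSet tile
  rw [Set.image_image]
  simp only [add_assoc]

lemma pair_add (v : ℝ × ℝ) (a b : ℝ) : v + (a, b) = (a + v.1, b + v.2) := by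
  simp [Prod.ext_iff, add_comm]

lemma translate_tA (v : ℝ × ℝ) (a b : ℝ) :
    translateSet v (tA a b) = tA (a + v.1) (b + v.2) := by
  rw [tA, tA, translate_tile, pair_add]
lemma translate_tB (v : ℝ × ℝ) (a b : ℝ) :
    translateSet v (tB a b) = tB (a + v.1) (b + v.2) := by
  rw [tB, tB, translate_tile, pair_add]; ring_nf
lemma translate_tC (v : ℝ × ℝ) (a b : ℝ) :
    translateSet v (tC a b) = tC (a + v.1) (b + v.2) := by
  rw [tC, tC, translate_tile, pair_add]; ring_nf
lemma translate_tD (v : ℝ × ℝ) (a b : ℝ) :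
    translateSet v (tD a b) = tD (a + v.1) (b + v.2) := by
  rw [tD, tD, translate_tile, pair_add]; ring_nf

lemma corner_mem_tA (a b : ℝ) : ((a, b) ∈ tA a b ∧ (a+1, b) ∈ tA a b ∧ (a, b+1) ∈ tA a b) := by
  refine ⟨?_, ?_, ?_⟩ <;> (rw [mem_tA]; dsimp only; refine ⟨by linarith, by linarith, by linarith⟩)
lemma corner_mem_tB (a b : ℝ) : ((a, b) ∈ tB a b ∧ (a+1, b) ∈ tB a b ∧ (a+1, b+1) ∈ tB a b) := by
  refine ⟨?_, ?_, ?_⟩ <;> (rw [mem_tB]; dsimp only; refine ⟨by linarith, by linarith, by linarith⟩)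
lemma corner_mem_tC (a b : ℝ) : ((a+1, b) ∈ tC a b ∧ (a, b+1) ∈ tC a b ∧ (a+1, b+1) ∈ tC a b) := by
  refine ⟨?_, ?_, ?_⟩ <;> (rw [mem_tC]; dsimp only; refine ⟨by linarith, by linarith, by linarith⟩)
lemma corner_mem_tD (a b : ℝ) : ((a, b) ∈ tD a b ∧ (a, b+1) ∈ tD a b ∧ (a+1, b+1) ∈ tD a b) := by
  refine ⟨?_, ?_, ?_⟩ <;> (rw [mem_tD]; dsimp only; refine ⟨by linarith, by linarith, by linarith⟩)

/-- parameters of a tile type are determined by the set -/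
lemma IsT_params {A : Set (ℝ × ℝ)} {a b a' b' : ℝ} (h : IsT A a b) (h' : IsT A a' b') :
    a = a' ∧ b = b' := by
  have ex : ∀ {c d : ℝ}, IsT A c d → (∃ p ∈ A, p.1 = c) ∧ (∃ p ∈ A, p.2 = d) := by
    rintro c d (rfl | rfl | rfl | rfl)
    · exact ⟨⟨(c, d), (corner_mem_tA c d).1, rfl⟩, ⟨(c, d), (corner_mem_tA c d).1, rfl⟩⟩
    · exact ⟨⟨(c, d), (corner_mem_tB c d).1, rfl⟩, ⟨(c, d), (corner_mem_tB c d).1, rfl⟩⟩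
    · exact ⟨⟨(c, d+1), (corner_mem_tC c d).2.1, rfl⟩, ⟨(c+1, d), (corner_mem_tC c d).1, rfl⟩⟩
    · exact ⟨⟨(c, d), (corner_mem_tD c d).1, rfl⟩, ⟨(c, d), (corner_mem_tD c d).1, rfl⟩⟩
  obtain ⟨⟨p, hp, hp1⟩, ⟨q, hq, hq2⟩⟩ := ex h
  obtain ⟨⟨p', hp', hp1'⟩, ⟨q', hq', hq2'⟩⟩ := ex h'
  have l1 : a' ≤ a := by rw [← hp1]; exact (sq_of_mem h' hp).1
  have l2 : a ≤ a' := by rw [← hp1']; exact (sq_of_mem h hp').1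
  have l3 : b' ≤ b := by rw [← hq2]; exact (sq_of_mem h' hq).2.2.1
  have l4 : b ≤ b' := by rw [← hq2']; exact (sq_of_mem h hq').2.2.1
  exact ⟨le_antisymm l2 l1, le_antisymm l4 l3⟩

section Distinct
variable {a b : ℝ}

lemma tA_ne_tB : tA a b ≠ tB a b := by
  intro h
  have h1 : (a, b+1) ∈ tA a b := (corner_mem_tA a b).2.2
  rw [h, mem_tB] at h1; dsimp only at h1; linarith [h1.2.2]
lemma tA_ne_tC : tA a b ≠ tC a b := by
  intro h
  have h1 : (a, b) ∈ tA a b := (corner_mem_tA a b).1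
  rw [h, mem_tC] at h1; dsimp only at h1; linarith [h1.2.2]
lemma tA_ne_tD : tA a b ≠ tD a b := by
  intro h
  have h1 : (a+1, b) ∈ tA a b := (corner_mem_tA a b).2.1
  rw [h, mem_tD] at h1; dsimp only at h1; linarith [h1.2.2]
lemma tB_ne_tC : tB a b ≠ tC a b := by
  intro h
  have h1 : (a, b) ∈ tB a b := (corner_mem_tB a b).1
  rw [h, mem_tC] at h1; dsimp only at h1; linarith [h1.2.2]
lemma tB_ne_tD : tB a b ≠ tD a b := by
  intro h
  have h1 : (a+1, b) ∈ tB a b := (corner_mem_tB a b).2.1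
  rw [h, mem_tD] at h1; dsimp only at h1; linarith [h1.2.2]
lemma tC_ne_tD : tC a b ≠ tD a b := by
  intro h
  have h1 : (a+1, b) ∈ tC a b := (corner_mem_tC a b).1
  rw [h, mem_tD] at h1; dsimp only at h1; linarith [h1.2.2]

end Distinct

section Vertices
variable (a b : ℝ)

lemma vert_tA_bl : IsVertexOf (a, b) (tA a b) :=
  ⟨0, (a, b), rfl, Or.inl (by simp only [rotk_zero]; simp [Prod.ext_iff])⟩
lemma vert_tA_br : IsVertexOf (a+1, b) (tA a b) :=
  ⟨0, (a, b), rfl, Or.inr (Or.inl (by simp only [rotk_zero]; simp [Prod.ext_iff]))⟩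
lemma vert_tA_tl : IsVertexOf (a, b+1) (tA a b) :=
  ⟨0, (a, b), rfl, Or.inr (Or.inr (by simp only [rotk_zero]; simp [Prod.ext_iff]))⟩
lemma vert_tB_br : IsVertexOf (a+1, b) (tB a b) :=
  ⟨1, (a+1, b), rfl, Or.inl (by simp only [rotk_one]; simp [Prod.ext_iff])⟩
lemma vert_tB_tr : IsVertexOf (a+1, b+1) (tB a b) :=
  ⟨1, (a+1, b), rfl, Or.inr (Or.inl (by simp only [rotk_one]; simp [Prod.ext_iff]))⟩
lemma vert_tB_bl : IsVertexOf (a, b) (tB a b) :=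
  ⟨1, (a+1, b), rfl, Or.inr (Or.inr (by simp only [rotk_one]; simp [Prod.ext_iff]))⟩
lemma vert_tC_tr : IsVertexOf (a+1, b+1) (tC a b) :=
  ⟨2, (a+1, b+1), rfl, Or.inl (by simp only [rotk_two]; simp [Prod.ext_iff])⟩
lemma vert_tC_tl : IsVertexOf (a, b+1) (tC a b) :=
  ⟨2, (a+1, b+1), rfl, Or.inr (Or.inl (by simp only [rotk_two]; simp [Prod.ext_iff]))⟩
lemma vert_tC_br : IsVertexOf (a+1, b) (tC a b) :=
  ⟨2, (a+1, b+1), rfl, Or.inr (Or.inr (by simp only [rotk_two]; simp [Prod.ext_iff]))⟩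
lemma vert_tD_tl : IsVertexOf (a, b+1) (tD a b) :=
  ⟨3, (a, b+1), rfl, Or.inl (by simp only [rotk_three]; simp [Prod.ext_iff])⟩
lemma vert_tD_bl : IsVertexOf (a, b) (tD a b) :=
  ⟨3, (a, b+1), rfl, Or.inr (Or.inl (by simp only [rotk_three]; simp [Prod.ext_iff]))⟩
lemma vert_tD_tr : IsVertexOf (a+1, b+1) (tD a b) :=
  ⟨3, (a, b+1), rfl, Or.inr (Or.inr (by simp only [rotk_three]; simp [Prod.ext_iff]))⟩

end Vertices

section Edges
variable (a b : ℝ)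

lemma edge_tA_bottom : IsEdgeOf (segment ℝ (a, b) (a+1, b)) (tA a b) := by
  refine ⟨0, (a, b), rfl, Or.inl ?_⟩
  simp only [rotk_zero]; congr 1 <;> simp [Prod.ext_iff]
lemma edge_tA_left : IsEdgeOf (segment ℝ (a, b) (a, b+1)) (tA a b) := by
  refine ⟨0, (a, b), rfl, Or.inr (Or.inl ?_)⟩
  simp only [rotk_zero]; congr 1 <;> simp [Prod.ext_iff]
lemma edge_tA_hyp : IsEdgeOf (segment ℝ (a+1, b) (a, b+1)) (tA a b) := by
  refine ⟨0, (a, b), rfl, Or.inr (Or.inr ?_)⟩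
  simp only [rotk_zero]; congr 1 <;> simp [Prod.ext_iff]
lemma edge_tB_right : IsEdgeOf (segment ℝ (a+1, b) (a+1, b+1)) (tB a b) := by
  refine ⟨1, (a+1, b), rfl, Or.inl ?_⟩
  simp only [rotk_one]; congr 1 <;> simp [Prod.ext_iff]
lemma edge_tB_bottom : IsEdgeOf (segment ℝ (a, b) (a+1, b)) (tB a b) := by
  refine ⟨1, (a+1, b), rfl, Or.inr (Or.inl ?_)⟩
  rw [segment_symm]; simp only [rotk_one]; congr 1 <;> simp [Prod.ext_iff]
lemma edge_tB_hyp : IsEdgeOf (segment ℝ (a, b) (a+1, b+1)) (tB a b) := by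
  refine ⟨1, (a+1, b), rfl, Or.inr (Or.inr ?_)⟩
  rw [segment_symm]; simp only [rotk_one]; congr 1 <;> simp [Prod.ext_iff]
lemma edge_tC_top : IsEdgeOf (segment ℝ (a, b+1) (a+1, b+1)) (tC a b) := by
  refine ⟨2, (a+1, b+1), rfl, Or.inl ?_⟩
  rw [segment_symm]; simp only [rotk_two]; congr 1 <;> simp [Prod.ext_iff]
lemma edge_tC_right : IsEdgeOf (segment ℝ (a+1, b) (a+1, b+1)) (tC a b) := by
  refine ⟨2, (a+1, b+1), rfl, Or.inr (Or.inl ?_)⟩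
  rw [segment_symm]; simp only [rotk_two]; congr 1 <;> simp [Prod.ext_iff]
lemma edge_tC_hyp : IsEdgeOf (segment ℝ (a+1, b) (a, b+1)) (tC a b) := by
  refine ⟨2, (a+1, b+1), rfl, Or.inr (Or.inr ?_)⟩
  rw [segment_symm]; simp only [rotk_two]; congr 1 <;> simp [Prod.ext_iff]
lemma edge_tD_left : IsEdgeOf (segment ℝ (a, b) (a, b+1)) (tD a b) := by
  refine ⟨3, (a, b+1), rfl, Or.inl ?_⟩
  rw [segment_symm]; simp only [rotk_three]; congr 1 <;> simp [Prod.ext_iff]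
lemma edge_tD_top : IsEdgeOf (segment ℝ (a, b+1) (a+1, b+1)) (tD a b) := by
  refine ⟨3, (a, b+1), rfl, Or.inr (Or.inl ?_)⟩
  simp only [rotk_three]; congr 1 <;> simp [Prod.ext_iff]
lemma edge_tD_hyp : IsEdgeOf (segment ℝ (a, b) (a+1, b+1)) (tD a b) := by
  refine ⟨3, (a, b+1), rfl, Or.inr (Or.inr ?_)⟩
  simp only [rotk_three]; congr 1 <;> simp [Prod.ext_iff]

end Edges

section Segments
variable (a b c : ℝ)

lemma pt_affine (x y : ℝ × ℝ) (θ : ℝ) :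
    x + θ • (y - x) = (x.1 + θ*(y.1 - x.1), x.2 + θ*(y.2 - x.2)) := by
  simp [Prod.ext_iff, smul_eq_mul]

lemma seg_horiz : segment ℝ (a, c) (a+1, c) = {p : ℝ × ℝ | p.2 = c ∧ a ≤ p.1 ∧ p.1 ≤ a+1} := by
  rw [segment_eq_image']
  ext p
  constructor
  · rintro ⟨θ, ⟨h0, h1⟩, rfl⟩
    simp only [pt_affine]
    refine ⟨by dsimp only; ring, by dsimp only; nlinarith, by dsimp only; nlinarith⟩
  · rintro ⟨h1, h2, h3⟩
    refine ⟨p.1 - a, ⟨by linarith, by linarith⟩, ?_⟩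
    simp only [pt_affine, Prod.ext_iff]
    constructor <;> (ring_nf; try linarith)

lemma seg_vert : segment ℝ (c, a) (c, a+1) = {p : ℝ × ℝ | p.1 = c ∧ a ≤ p.2 ∧ p.2 ≤ a+1} := by
  rw [segment_eq_image']
  ext p
  constructor
  · rintro ⟨θ, ⟨h0, h1⟩, rfl⟩
    simp only [pt_affine]
    refine ⟨by dsimp only; ring, by dsimp only; nlinarith, by dsimp only; nlinarith⟩
  · rintro ⟨h1, h2, h3⟩
    refine ⟨p.2 - a, ⟨by linarith, by linarith⟩, ?_⟩
    simp only [pt_affine, Prod.ext_iff]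
    constructor <;> (ring_nf; try linarith)

lemma seg_diagA : segment ℝ (a+1, b) (a, b+1) =
    {p : ℝ × ℝ | p.1 + p.2 = a + b + 1 ∧ a ≤ p.1 ∧ p.1 ≤ a+1} := by
  rw [segment_eq_image']
  ext p
  constructor
  · rintro ⟨θ, ⟨h0, h1⟩, rfl⟩
    simp only [pt_affine]
    refine ⟨by dsimp only; ring, by dsimp only; nlinarith, by dsimp only; nlinarith⟩
  · rintro ⟨h1, h2, h3⟩
    refine ⟨a + 1 - p.1, ⟨by linarith, by linarith⟩, ?_⟩
    simp only [pt_affine, Prod.ext_iff]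
    constructor <;> (ring_nf; try linarith)

lemma seg_diagB : segment ℝ (a, b) (a+1, b+1) =
    {p : ℝ × ℝ | p.1 - p.2 = a - b ∧ a ≤ p.1 ∧ p.1 ≤ a+1} := by
  rw [segment_eq_image']
  ext p
  constructor
  · rintro ⟨θ, ⟨h0, h1⟩, rfl⟩
    simp only [pt_affine]
    refine ⟨by dsimp only; ring, by dsimp only; nlinarith, by dsimp only; nlinarith⟩
  · rintro ⟨h1, h2, h3⟩
    refine ⟨p.1 - a, ⟨by linarith, by linarith⟩, ?_⟩
    simp only [pt_affine, Prod.ext_iff]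
    constructor <;> (ring_nf; try linarith)

end Segments

lemma interH_A_A (a b : ℝ) : tA a b ∩ tA (a + 1) (b) = {((a + 1 : ℝ), (b : ℝ))} := by
  ext ⟨x, y⟩
  simp only [Set.mem_inter_iff, mem_tA, mem_tA, Set.mem_singleton_iff, Prod.mk.injEq]
  try dsimp only
  constructor
  · rintro ⟨⟨h1, h2, h3⟩, h4, h5, h6⟩
    constructor <;> linarith
  · rintro ⟨rfl, rfl⟩
    refine ⟨⟨by linarith, by linarith, by linarith⟩, by linarith, by linarith, by linarith⟩

lemma interH_A_B (a b : ℝ) : tA a b ∩ tB (a + 1) (b) = {((a + 1 : ℝ), (b : ℝ))} := by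
  ext ⟨x, y⟩
  simp only [Set.mem_inter_iff, mem_tA, mem_tB, Set.mem_singleton_iff, Prod.mk.injEq]
  try dsimp only
  constructor
  · rintro ⟨⟨h1, h2, h3⟩, h4, h5, h6⟩
    constructor <;> linarith
  · rintro ⟨rfl, rfl⟩
    refine ⟨⟨by linarith, by linarith, by linarith⟩, by linarith, by linarith, by linarith⟩

lemma interH_A_C (a b : ℝ) : tA a b ∩ tC (a + 1) (b) = ∅ := by
  apply Set.eq_empty_iff_forall_notMem.mpr
  rintro ⟨x, y⟩ ⟨h, h'⟩
  rw [mem_tA] at h; rw [mem_tC] at h'; dsimp only at h h'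
  obtain ⟨h1, h2, h3⟩ := h; obtain ⟨h4, h5, h6⟩ := h'
  linarith

lemma interH_A_D (a b : ℝ) : tA a b ∩ tD (a + 1) (b) = {((a + 1 : ℝ), (b : ℝ))} := by
  ext ⟨x, y⟩
  simp only [Set.mem_inter_iff, mem_tA, mem_tD, Set.mem_singleton_iff, Prod.mk.injEq]
  try dsimp only
  constructor
  · rintro ⟨⟨h1, h2, h3⟩, h4, h5, h6⟩
    constructor <;> linarith
  · rintro ⟨rfl, rfl⟩
    refine ⟨⟨by linarith, by linarith, by linarith⟩, by linarith, by linarith, by linarith⟩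

lemma interH_B_A (a b : ℝ) : tB a b ∩ tA (a + 1) (b) = segment ℝ (a+1, b) (a+1, b+1) := by
  rw [seg_vert b (a+1)]
  ext ⟨x, y⟩
  simp only [Set.mem_inter_iff, mem_tB, mem_tA, Set.mem_setOf_eq]
  try dsimp only
  constructor
  · rintro ⟨⟨h1, h2, h3⟩, h4, h5, h6⟩
    refine ⟨by linarith, by linarith, by linarith⟩
  · rintro ⟨h1, h2, h3⟩
    refine ⟨⟨by linarith, by linarith, by linarith⟩, by linarith, by linarith, by linarith⟩

lemma interH_B_B (a b : ℝ) : tB a b ∩ tB (a + 1) (b) = {((a + 1 : ℝ), (b : ℝ))} := by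
  ext ⟨x, y⟩
  simp only [Set.mem_inter_iff, mem_tB, mem_tB, Set.mem_singleton_iff, Prod.mk.injEq]
  try dsimp only
  constructor
  · rintro ⟨⟨h1, h2, h3⟩, h4, h5, h6⟩
    constructor <;> linarith
  · rintro ⟨rfl, rfl⟩
    refine ⟨⟨by linarith, by linarith, by linarith⟩, by linarith, by linarith, by linarith⟩

lemma interH_B_C (a b : ℝ) : tB a b ∩ tC (a + 1) (b) = {((a + 1 : ℝ), (b + 1 : ℝ))} := by
  ext ⟨x, y⟩
  simp only [Set.mem_inter_iff, mem_tB, mem_tC, Set.mem_singleton_iff, Prod.mk.injEq]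
  try dsimp only
  constructor
  · rintro ⟨⟨h1, h2, h3⟩, h4, h5, h6⟩
    constructor <;> linarith
  · rintro ⟨rfl, rfl⟩
    refine ⟨⟨by linarith, by linarith, by linarith⟩, by linarith, by linarith, by linarith⟩

lemma interH_B_D (a b : ℝ) : tB a b ∩ tD (a + 1) (b) = segment ℝ (a+1, b) (a+1, b+1) := by
  rw [seg_vert b (a+1)]
  ext ⟨x, y⟩
  simp only [Set.mem_inter_iff, mem_tB, mem_tD, Set.mem_setOf_eq]
  try dsimp only
  constructor
  · rintro ⟨⟨h1, h2, h3⟩, h4, h5, h6⟩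
    refine ⟨by linarith, by linarith, by linarith⟩
  · rintro ⟨h1, h2, h3⟩
    refine ⟨⟨by linarith, by linarith, by linarith⟩, by linarith, by linarith, by linarith⟩

lemma interH_C_A (a b : ℝ) : tC a b ∩ tA (a + 1) (b) = segment ℝ (a+1, b) (a+1, b+1) := by
  rw [seg_vert b (a+1)]
  ext ⟨x, y⟩
  simp only [Set.mem_inter_iff, mem_tC, mem_tA, Set.mem_setOf_eq]
  try dsimp only
  constructor
  · rintro ⟨⟨h1, h2, h3⟩, h4, h5, h6⟩
    refine ⟨by linarith, by linarith, by linarith⟩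
  · rintro ⟨h1, h2, h3⟩
    refine ⟨⟨by linarith, by linarith, by linarith⟩, by linarith, by linarith, by linarith⟩

lemma interH_C_B (a b : ℝ) : tC a b ∩ tB (a + 1) (b) = {((a + 1 : ℝ), (b : ℝ))} := by
  ext ⟨x, y⟩
  simp only [Set.mem_inter_iff, mem_tC, mem_tB, Set.mem_singleton_iff, Prod.mk.injEq]
  try dsimp only
  constructor
  · rintro ⟨⟨h1, h2, h3⟩, h4, h5, h6⟩
    constructor <;> linarith
  · rintro ⟨rfl, rfl⟩
    refine ⟨⟨by linarith, by linarith, by linarith⟩, by linarith, by linarith, by linarith⟩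

lemma interH_C_C (a b : ℝ) : tC a b ∩ tC (a + 1) (b) = {((a + 1 : ℝ), (b + 1 : ℝ))} := by
  ext ⟨x, y⟩
  simp only [Set.mem_inter_iff, mem_tC, mem_tC, Set.mem_singleton_iff, Prod.mk.injEq]
  try dsimp only
  constructor
  · rintro ⟨⟨h1, h2, h3⟩, h4, h5, h6⟩
    constructor <;> linarith
  · rintro ⟨rfl, rfl⟩
    refine ⟨⟨by linarith, by linarith, by linarith⟩, by linarith, by linarith, by linarith⟩

lemma interH_C_D (a b : ℝ) : tC a b ∩ tD (a + 1) (b) = segment ℝ (a+1, b) (a+1, b+1) := by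
  rw [seg_vert b (a+1)]
  ext ⟨x, y⟩
  simp only [Set.mem_inter_iff, mem_tC, mem_tD, Set.mem_setOf_eq]
  try dsimp only
  constructor
  · rintro ⟨⟨h1, h2, h3⟩, h4, h5, h6⟩
    refine ⟨by linarith, by linarith, by linarith⟩
  · rintro ⟨h1, h2, h3⟩
    refine ⟨⟨by linarith, by linarith, by linarith⟩, by linarith, by linarith, by linarith⟩

lemma interH_D_A (a b : ℝ) : tD a b ∩ tA (a + 1) (b) = {((a + 1 : ℝ), (b + 1 : ℝ))} := by
  ext ⟨x, y⟩
  simp only [Set.mem_inter_iff, mem_tD, mem_tA, Set.mem_singleton_iff, Prod.mk.injEq]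
  try dsimp only
  constructor
  · rintro ⟨⟨h1, h2, h3⟩, h4, h5, h6⟩
    constructor <;> linarith
  · rintro ⟨rfl, rfl⟩
    refine ⟨⟨by linarith, by linarith, by linarith⟩, by linarith, by linarith, by linarith⟩

lemma interH_D_B (a b : ℝ) : tD a b ∩ tB (a + 1) (b) = ∅ := by
  apply Set.eq_empty_iff_forall_notMem.mpr
  rintro ⟨x, y⟩ ⟨h, h'⟩
  rw [mem_tD] at h; rw [mem_tB] at h'; dsimp only at h h'
  obtain ⟨h1, h2, h3⟩ := h; obtain ⟨h4, h5, h6⟩ := h'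
  linarith

lemma interH_D_C (a b : ℝ) : tD a b ∩ tC (a + 1) (b) = {((a + 1 : ℝ), (b + 1 : ℝ))} := by
  ext ⟨x, y⟩
  simp only [Set.mem_inter_iff, mem_tD, mem_tC, Set.mem_singleton_iff, Prod.mk.injEq]
  try dsimp only
  constructor
  · rintro ⟨⟨h1, h2, h3⟩, h4, h5, h6⟩
    constructor <;> linarith
  · rintro ⟨rfl, rfl⟩
    refine ⟨⟨by linarith, by linarith, by linarith⟩, by linarith, by linarith, by linarith⟩

lemma interH_D_D (a b : ℝ) : tD a b ∩ tD (a + 1) (b) = {((a + 1 : ℝ), (b + 1 : ℝ))} := by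
  ext ⟨x, y⟩
  simp only [Set.mem_inter_iff, mem_tD, mem_tD, Set.mem_singleton_iff, Prod.mk.injEq]
  try dsimp only
  constructor
  · rintro ⟨⟨h1, h2, h3⟩, h4, h5, h6⟩
    constructor <;> linarith
  · rintro ⟨rfl, rfl⟩
    refine ⟨⟨by linarith, by linarith, by linarith⟩, by linarith, by linarith, by linarith⟩

lemma interV_A_A (a b : ℝ) : tA a b ∩ tA (a) (b + 1) = {((a : ℝ), (b + 1 : ℝ))} := by
  ext ⟨x, y⟩
  simp only [Set.mem_inter_iff, mem_tA, mem_tA, Set.mem_singleton_iff, Prod.mk.injEq]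
  try dsimp only
  constructor
  · rintro ⟨⟨h1, h2, h3⟩, h4, h5, h6⟩
    constructor <;> linarith
  · rintro ⟨rfl, rfl⟩
    refine ⟨⟨by linarith, by linarith, by linarith⟩, by linarith, by linarith, by linarith⟩

lemma interV_A_B (a b : ℝ) : tA a b ∩ tB (a) (b + 1) = {((a : ℝ), (b + 1 : ℝ))} := by
  ext ⟨x, y⟩
  simp only [Set.mem_inter_iff, mem_tA, mem_tB, Set.mem_singleton_iff, Prod.mk.injEq]
  try dsimp only
  constructor
  · rintro ⟨⟨h1, h2, h3⟩, h4, h5, h6⟩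
    constructor <;> linarith
  · rintro ⟨rfl, rfl⟩
    refine ⟨⟨by linarith, by linarith, by linarith⟩, by linarith, by linarith, by linarith⟩

lemma interV_A_C (a b : ℝ) : tA a b ∩ tC (a) (b + 1) = ∅ := by
  apply Set.eq_empty_iff_forall_notMem.mpr
  rintro ⟨x, y⟩ ⟨h, h'⟩
  rw [mem_tA] at h; rw [mem_tC] at h'; dsimp only at h h'
  obtain ⟨h1, h2, h3⟩ := h; obtain ⟨h4, h5, h6⟩ := h'
  linarith

lemma interV_A_D (a b : ℝ) : tA a b ∩ tD (a) (b + 1) = {((a : ℝ), (b + 1 : ℝ))} := by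
  ext ⟨x, y⟩
  simp only [Set.mem_inter_iff, mem_tA, mem_tD, Set.mem_singleton_iff, Prod.mk.injEq]
  try dsimp only
  constructor
  · rintro ⟨⟨h1, h2, h3⟩, h4, h5, h6⟩
    constructor <;> linarith
  · rintro ⟨rfl, rfl⟩
    refine ⟨⟨by linarith, by linarith, by linarith⟩, by linarith, by linarith, by linarith⟩

lemma interV_B_A (a b : ℝ) : tB a b ∩ tA (a) (b + 1) = {((a + 1 : ℝ), (b + 1 : ℝ))} := by
  ext ⟨x, y⟩
  simp only [Set.mem_inter_iff, mem_tB, mem_tA, Set.mem_singleton_iff, Prod.mk.injEq]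
  try dsimp only
  constructor
  · rintro ⟨⟨h1, h2, h3⟩, h4, h5, h6⟩
    constructor <;> linarith
  · rintro ⟨rfl, rfl⟩
    refine ⟨⟨by linarith, by linarith, by linarith⟩, by linarith, by linarith, by linarith⟩

lemma interV_B_B (a b : ℝ) : tB a b ∩ tB (a) (b + 1) = {((a + 1 : ℝ), (b + 1 : ℝ))} := by
  ext ⟨x, y⟩
  simp only [Set.mem_inter_iff, mem_tB, mem_tB, Set.mem_singleton_iff, Prod.mk.injEq]
  try dsimp only
  constructor
  · rintro ⟨⟨h1, h2, h3⟩, h4, h5, h6⟩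
    constructor <;> linarith
  · rintro ⟨rfl, rfl⟩
    refine ⟨⟨by linarith, by linarith, by linarith⟩, by linarith, by linarith, by linarith⟩

lemma interV_B_C (a b : ℝ) : tB a b ∩ tC (a) (b + 1) = {((a + 1 : ℝ), (b + 1 : ℝ))} := by
  ext ⟨x, y⟩
  simp only [Set.mem_inter_iff, mem_tB, mem_tC, Set.mem_singleton_iff, Prod.mk.injEq]
  try dsimp only
  constructor
  · rintro ⟨⟨h1, h2, h3⟩, h4, h5, h6⟩
    constructor <;> linarith
  · rintro ⟨rfl, rfl⟩
    refine ⟨⟨by linarith, by linarith, by linarith⟩, by linarith, by linarith, by linarith⟩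

lemma interV_B_D (a b : ℝ) : tB a b ∩ tD (a) (b + 1) = ∅ := by
  apply Set.eq_empty_iff_forall_notMem.mpr
  rintro ⟨x, y⟩ ⟨h, h'⟩
  rw [mem_tB] at h; rw [mem_tD] at h'; dsimp only at h h'
  obtain ⟨h1, h2, h3⟩ := h; obtain ⟨h4, h5, h6⟩ := h'
  linarith

lemma interV_C_A (a b : ℝ) : tC a b ∩ tA (a) (b + 1) = segment ℝ (a, b+1) (a+1, b+1) := by
  rw [seg_horiz a (b+1)]
  ext ⟨x, y⟩
  simp only [Set.mem_inter_iff, mem_tC, mem_tA, Set.mem_setOf_eq]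
  try dsimp only
  constructor
  · rintro ⟨⟨h1, h2, h3⟩, h4, h5, h6⟩
    refine ⟨by linarith, by linarith, by linarith⟩
  · rintro ⟨h1, h2, h3⟩
    refine ⟨⟨by linarith, by linarith, by linarith⟩, by linarith, by linarith, by linarith⟩

lemma interV_C_B (a b : ℝ) : tC a b ∩ tB (a) (b + 1) = segment ℝ (a, b+1) (a+1, b+1) := by
  rw [seg_horiz a (b+1)]
  ext ⟨x, y⟩
  simp only [Set.mem_inter_iff, mem_tC, mem_tB, Set.mem_setOf_eq]
  try dsimp only
  constructor
  · rintro ⟨⟨h1, h2, h3⟩, h4, h5, h6⟩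
    refine ⟨by linarith, by linarith, by linarith⟩
  · rintro ⟨h1, h2, h3⟩
    refine ⟨⟨by linarith, by linarith, by linarith⟩, by linarith, by linarith, by linarith⟩

lemma interV_C_C (a b : ℝ) : tC a b ∩ tC (a) (b + 1) = {((a + 1 : ℝ), (b + 1 : ℝ))} := by
  ext ⟨x, y⟩
  simp only [Set.mem_inter_iff, mem_tC, mem_tC, Set.mem_singleton_iff, Prod.mk.injEq]
  try dsimp only
  constructor
  · rintro ⟨⟨h1, h2, h3⟩, h4, h5, h6⟩
    constructor <;> linarith
  · rintro ⟨rfl, rfl⟩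
    refine ⟨⟨by linarith, by linarith, by linarith⟩, by linarith, by linarith, by linarith⟩

lemma interV_C_D (a b : ℝ) : tC a b ∩ tD (a) (b + 1) = {((a : ℝ), (b + 1 : ℝ))} := by
  ext ⟨x, y⟩
  simp only [Set.mem_inter_iff, mem_tC, mem_tD, Set.mem_singleton_iff, Prod.mk.injEq]
  try dsimp only
  constructor
  · rintro ⟨⟨h1, h2, h3⟩, h4, h5, h6⟩
    constructor <;> linarith
  · rintro ⟨rfl, rfl⟩
    refine ⟨⟨by linarith, by linarith, by linarith⟩, by linarith, by linarith, by linarith⟩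

lemma interV_D_A (a b : ℝ) : tD a b ∩ tA (a) (b + 1) = segment ℝ (a, b+1) (a+1, b+1) := by
  rw [seg_horiz a (b+1)]
  ext ⟨x, y⟩
  simp only [Set.mem_inter_iff, mem_tD, mem_tA, Set.mem_setOf_eq]
  try dsimp only
  constructor
  · rintro ⟨⟨h1, h2, h3⟩, h4, h5, h6⟩
    refine ⟨by linarith, by linarith, by linarith⟩
  · rintro ⟨h1, h2, h3⟩
    refine ⟨⟨by linarith, by linarith, by linarith⟩, by linarith, by linarith, by linarith⟩

lemma interV_D_B (a b : ℝ) : tD a b ∩ tB (a) (b + 1) = segment ℝ (a, b+1) (a+1, b+1) := by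
  rw [seg_horiz a (b+1)]
  ext ⟨x, y⟩
  simp only [Set.mem_inter_iff, mem_tD, mem_tB, Set.mem_setOf_eq]
  try dsimp only
  constructor
  · rintro ⟨⟨h1, h2, h3⟩, h4, h5, h6⟩
    refine ⟨by linarith, by linarith, by linarith⟩
  · rintro ⟨h1, h2, h3⟩
    refine ⟨⟨by linarith, by linarith, by linarith⟩, by linarith, by linarith, by linarith⟩

lemma interV_D_C (a b : ℝ) : tD a b ∩ tC (a) (b + 1) = {((a + 1 : ℝ), (b + 1 : ℝ))} := by
  ext ⟨x, y⟩
  simp only [Set.mem_inter_iff, mem_tD, mem_tC, Set.mem_singleton_iff, Prod.mk.injEq]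
  try dsimp only
  constructor
  · rintro ⟨⟨h1, h2, h3⟩, h4, h5, h6⟩
    constructor <;> linarith
  · rintro ⟨rfl, rfl⟩
    refine ⟨⟨by linarith, by linarith, by linarith⟩, by linarith, by linarith, by linarith⟩

lemma interV_D_D (a b : ℝ) : tD a b ∩ tD (a) (b + 1) = {((a : ℝ), (b + 1 : ℝ))} := by
  ext ⟨x, y⟩
  simp only [Set.mem_inter_iff, mem_tD, mem_tD, Set.mem_singleton_iff, Prod.mk.injEq]
  try dsimp only
  constructor
  · rintro ⟨⟨h1, h2, h3⟩, h4, h5, h6⟩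
    constructor <;> linarith
  · rintro ⟨rfl, rfl⟩
    refine ⟨⟨by linarith, by linarith, by linarith⟩, by linarith, by linarith, by linarith⟩

def Good (A B : Set (ℝ × ℝ)) : Prop :=
  A ∩ B = ∅ ∨
  (∃ p, IsVertexOf p A ∧ IsVertexOf p B ∧ A ∩ B = {p}) ∨
  (∃ e, IsEdgeOf e A ∧ IsEdgeOf e B ∧ A ∩ B = e)

lemma Good.symm {A B : Set (ℝ × ℝ)} (h : Good A B) : Good B A := by
  rcases h with h | ⟨p, h1, h2, h3⟩ | ⟨e, h1, h2, h3⟩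
  · exact Or.inl (by rw [Set.inter_comm]; exact h)
  · exact Or.inr (Or.inl ⟨p, h2, h1, by rw [Set.inter_comm]; exact h3⟩)
  · exact Or.inr (Or.inr ⟨e, h2, h1, by rw [Set.inter_comm]; exact h3⟩)

-- same-square intersections
lemma inter_AC (a b : ℝ) : tA a b ∩ tC a b = segment ℝ (a+1, b) (a, b+1) := by
  rw [seg_diagA]
  ext ⟨x, y⟩
  simp only [Set.mem_inter_iff, mem_tA, mem_tC, Set.mem_setOf_eq]
  try dsimp only
  constructor
  · rintro ⟨⟨h1, h2, h3⟩, h4, h5, h6⟩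
    refine ⟨by linarith, by linarith, by linarith⟩
  · rintro ⟨h1, h2, h3⟩
    refine ⟨⟨by linarith, by linarith, by linarith⟩, by linarith, by linarith, by linarith⟩

lemma inter_BD (a b : ℝ) : tB a b ∩ tD a b = segment ℝ (a, b) (a+1, b+1) := by
  rw [seg_diagB]
  ext ⟨x, y⟩
  simp only [Set.mem_inter_iff, mem_tB, mem_tD, Set.mem_setOf_eq]
  try dsimp only
  constructor
  · rintro ⟨⟨h1, h2, h3⟩, h4, h5, h6⟩
    refine ⟨by linarith, by linarith, by linarith⟩
  · rintro ⟨h1, h2, h3⟩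
    refine ⟨⟨by linarith, by linarith, by linarith⟩, by linarith, by linarith, by linarith⟩

lemma good_same_AC (a b : ℝ) : Good (tA a b) (tC a b) :=
  Or.inr (Or.inr ⟨_, edge_tA_hyp a b, edge_tC_hyp a b, inter_AC a b⟩)
lemma good_same_BD (a b : ℝ) : Good (tB a b) (tD a b) :=
  Or.inr (Or.inr ⟨_, edge_tB_hyp a b, edge_tD_hyp a b, inter_BD a b⟩)

-- corner (diagonal square) machinery
lemma inter_singleton_of {A B : Set (ℝ × ℝ)} {q : ℝ × ℝ}
    (h : A ∩ B ⊆ {q}) (h1 : q ∈ A) (h2 : q ∈ B) : A ∩ B = {q} :=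
  le_antisymm h (by rintro p rfl; exact ⟨h1, h2⟩)

lemma inter_empty_left {A B : Set (ℝ × ℝ)} {q : ℝ × ℝ}
    (h : A ∩ B ⊆ {q}) (h1 : q ∉ A) : A ∩ B = ∅ := by
  apply Set.eq_empty_iff_forall_notMem.mpr
  intro p hp
  have := h hp
  rw [Set.mem_singleton_iff] at this
  exact h1 (this ▸ hp.1)

lemma inter_empty_right {A B : Set (ℝ × ℝ)} {q : ℝ × ℝ}
    (h : A ∩ B ⊆ {q}) (h2 : q ∉ B) : A ∩ B = ∅ := by
  apply Set.eq_empty_iff_forall_notMem.mpr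
  intro p hp
  have := h hp
  rw [Set.mem_singleton_iff] at this
  exact h2 (this ▸ hp.2)

lemma corner_sub_pp {A B : Set (ℝ × ℝ)} {a b : ℝ} (hA : IsT A a b) (hB : IsT B (a+1) (b+1)) :
    A ∩ B ⊆ {((a+1 : ℝ), (b+1 : ℝ))} := by
  rintro p ⟨hpA, hpB⟩
  have s1 := sq_of_mem hA hpA
  have s2 := sq_of_mem hB hpB
  have : p.1 = a + 1 ∧ p.2 = b + 1 := ⟨by linarith [s1.2.1, s2.1], by linarith [s1.2.2.2, s2.2.2.1]⟩
  rw [Set.mem_singleton_iff, Prod.ext_iff]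
  exact this

lemma corner_sub_pm {A B : Set (ℝ × ℝ)} {a b : ℝ} (hA : IsT A a b) (hB : IsT B (a+1) (b-1)) :
    A ∩ B ⊆ {((a+1 : ℝ), (b : ℝ))} := by
  rintro p ⟨hpA, hpB⟩
  have s1 := sq_of_mem hA hpA
  have s2 := sq_of_mem hB hpB
  have : p.1 = a + 1 ∧ p.2 = b := ⟨by linarith [s1.2.1, s2.1], by linarith [s1.2.2.1, s2.2.2.2]⟩
  rw [Set.mem_singleton_iff, Prod.ext_iff]
  exact this

-- non-membership of the one missing corner for each type
lemma notmem_tA_tr (a b : ℝ) : ((a+1 : ℝ), (b+1 : ℝ)) ∉ tA a b := by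
  rw [mem_tA]; try dsimp only
  rintro ⟨h1, h2, h3⟩; linarith
lemma notmem_tB_tl (a b : ℝ) : ((a : ℝ), (b+1 : ℝ)) ∉ tB a b := by
  rw [mem_tB]; try dsimp only
  rintro ⟨h1, h2, h3⟩; linarith
lemma notmem_tC_bl (a b : ℝ) : ((a : ℝ), (b : ℝ)) ∉ tC a b := by
  rw [mem_tC]; try dsimp only
  rintro ⟨h1, h2, h3⟩; linarith
lemma notmem_tD_br (a b : ℝ) : ((a+1 : ℝ), (b : ℝ)) ∉ tD a b := by
  rw [mem_tD]; try dsimp only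
  rintro ⟨h1, h2, h3⟩; linarith

lemma goodH_A_A (a b : ℝ) : Good (tA a b) (tA (a + 1) b) := by
  refine Or.inr (Or.inl ⟨_, vert_tA_br a b, ?_, interH_A_A a b⟩)
  exact vert_tA_bl (a+1) b

lemma goodH_A_B (a b : ℝ) : Good (tA a b) (tB (a + 1) b) := by
  refine Or.inr (Or.inl ⟨_, vert_tA_br a b, ?_, interH_A_B a b⟩)
  exact vert_tB_bl (a+1) b

lemma goodH_A_C (a b : ℝ) : Good (tA a b) (tC (a + 1) b) := by
  exact Or.inl (interH_A_C a b)

lemma goodH_A_D (a b : ℝ) : Good (tA a b) (tD (a + 1) b) := by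
  refine Or.inr (Or.inl ⟨_, vert_tA_br a b, ?_, interH_A_D a b⟩)
  exact vert_tD_bl (a+1) b

lemma goodH_B_A (a b : ℝ) : Good (tB a b) (tA (a + 1) b) := by
  refine Or.inr (Or.inr ⟨_, edge_tB_right a b, ?_, interH_B_A a b⟩)
  exact edge_tA_left (a+1) b

lemma goodH_B_B (a b : ℝ) : Good (tB a b) (tB (a + 1) b) := by
  refine Or.inr (Or.inl ⟨_, vert_tB_br a b, ?_, interH_B_B a b⟩)
  exact vert_tB_bl (a+1) b

lemma goodH_B_C (a b : ℝ) : Good (tB a b) (tC (a + 1) b) := by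
  refine Or.inr (Or.inl ⟨_, vert_tB_tr a b, ?_, interH_B_C a b⟩)
  exact vert_tC_tl (a+1) b

lemma goodH_B_D (a b : ℝ) : Good (tB a b) (tD (a + 1) b) := by
  refine Or.inr (Or.inr ⟨_, edge_tB_right a b, ?_, interH_B_D a b⟩)
  exact edge_tD_left (a+1) b

lemma goodH_C_A (a b : ℝ) : Good (tC a b) (tA (a + 1) b) := by
  refine Or.inr (Or.inr ⟨_, edge_tC_right a b, ?_, interH_C_A a b⟩)
  exact edge_tA_left (a+1) b

lemma goodH_C_B (a b : ℝ) : Good (tC a b) (tB (a + 1) b) := by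
  refine Or.inr (Or.inl ⟨_, vert_tC_br a b, ?_, interH_C_B a b⟩)
  exact vert_tB_bl (a+1) b

lemma goodH_C_C (a b : ℝ) : Good (tC a b) (tC (a + 1) b) := by
  refine Or.inr (Or.inl ⟨_, vert_tC_tr a b, ?_, interH_C_C a b⟩)
  exact vert_tC_tl (a+1) b

lemma goodH_C_D (a b : ℝ) : Good (tC a b) (tD (a + 1) b) := by
  refine Or.inr (Or.inr ⟨_, edge_tC_right a b, ?_, interH_C_D a b⟩)
  exact edge_tD_left (a+1) b

lemma goodH_D_A (a b : ℝ) : Good (tD a b) (tA (a + 1) b) := by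
  refine Or.inr (Or.inl ⟨_, vert_tD_tr a b, ?_, interH_D_A a b⟩)
  exact vert_tA_tl (a+1) b

lemma goodH_D_B (a b : ℝ) : Good (tD a b) (tB (a + 1) b) := by
  exact Or.inl (interH_D_B a b)

lemma goodH_D_C (a b : ℝ) : Good (tD a b) (tC (a + 1) b) := by
  refine Or.inr (Or.inl ⟨_, vert_tD_tr a b, ?_, interH_D_C a b⟩)
  exact vert_tC_tl (a+1) b

lemma goodH_D_D (a b : ℝ) : Good (tD a b) (tD (a + 1) b) := by
  refine Or.inr (Or.inl ⟨_, vert_tD_tr a b, ?_, interH_D_D a b⟩)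
  exact vert_tD_tl (a+1) b

lemma goodV_A_A (a b : ℝ) : Good (tA a b) (tA a (b + 1)) := by
  refine Or.inr (Or.inl ⟨_, vert_tA_tl a b, ?_, interV_A_A a b⟩)
  exact vert_tA_bl a (b+1)

lemma goodV_A_B (a b : ℝ) : Good (tA a b) (tB a (b + 1)) := by
  refine Or.inr (Or.inl ⟨_, vert_tA_tl a b, ?_, interV_A_B a b⟩)
  exact vert_tB_bl a (b+1)

lemma goodV_A_C (a b : ℝ) : Good (tA a b) (tC a (b + 1)) := by
  exact Or.inl (interV_A_C a b)

lemma goodV_A_D (a b : ℝ) : Good (tA a b) (tD a (b + 1)) := by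
  refine Or.inr (Or.inl ⟨_, vert_tA_tl a b, ?_, interV_A_D a b⟩)
  exact vert_tD_bl a (b+1)

lemma goodV_B_A (a b : ℝ) : Good (tB a b) (tA a (b + 1)) := by
  refine Or.inr (Or.inl ⟨_, vert_tB_tr a b, ?_, interV_B_A a b⟩)
  exact vert_tA_br a (b+1)

lemma goodV_B_B (a b : ℝ) : Good (tB a b) (tB a (b + 1)) := by
  refine Or.inr (Or.inl ⟨_, vert_tB_tr a b, ?_, interV_B_B a b⟩)
  exact vert_tB_br a (b+1)

lemma goodV_B_C (a b : ℝ) : Good (tB a b) (tC a (b + 1)) := by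
  refine Or.inr (Or.inl ⟨_, vert_tB_tr a b, ?_, interV_B_C a b⟩)
  exact vert_tC_br a (b+1)

lemma goodV_B_D (a b : ℝ) : Good (tB a b) (tD a (b + 1)) := by
  exact Or.inl (interV_B_D a b)

lemma goodV_C_A (a b : ℝ) : Good (tC a b) (tA a (b + 1)) := by
  refine Or.inr (Or.inr ⟨_, edge_tC_top a b, ?_, interV_C_A a b⟩)
  exact edge_tA_bottom a (b+1)

lemma goodV_C_B (a b : ℝ) : Good (tC a b) (tB a (b + 1)) := by
  refine Or.inr (Or.inr ⟨_, edge_tC_top a b, ?_, interV_C_B a b⟩)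
  exact edge_tB_bottom a (b+1)

lemma goodV_C_C (a b : ℝ) : Good (tC a b) (tC a (b + 1)) := by
  refine Or.inr (Or.inl ⟨_, vert_tC_tr a b, ?_, interV_C_C a b⟩)
  exact vert_tC_br a (b+1)

lemma goodV_C_D (a b : ℝ) : Good (tC a b) (tD a (b + 1)) := by
  refine Or.inr (Or.inl ⟨_, vert_tC_tl a b, ?_, interV_C_D a b⟩)
  exact vert_tD_bl a (b+1)

lemma goodV_D_A (a b : ℝ) : Good (tD a b) (tA a (b + 1)) := by
  refine Or.inr (Or.inr ⟨_, edge_tD_top a b, ?_, interV_D_A a b⟩)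
  exact edge_tA_bottom a (b+1)

lemma goodV_D_B (a b : ℝ) : Good (tD a b) (tB a (b + 1)) := by
  refine Or.inr (Or.inr ⟨_, edge_tD_top a b, ?_, interV_D_B a b⟩)
  exact edge_tB_bottom a (b+1)

lemma goodV_D_C (a b : ℝ) : Good (tD a b) (tC a (b + 1)) := by
  refine Or.inr (Or.inl ⟨_, vert_tD_tr a b, ?_, interV_D_C a b⟩)
  exact vert_tC_br a (b+1)

lemma goodV_D_D (a b : ℝ) : Good (tD a b) (tD a (b + 1)) := by
  refine Or.inr (Or.inl ⟨_, vert_tD_tl a b, ?_, interV_D_D a b⟩)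
  exact vert_tD_bl a (b+1)

lemma goodPP_A_A (a b : ℝ) : Good (tA a b) (tA (a + 1) (b + 1)) := by
  have hsub := corner_sub_pp (A := tA a b) (B := tA (a+1) (b+1)) (Or.inl rfl) (Or.inl rfl)
  exact Or.inl (inter_empty_left hsub (notmem_tA_tr a b))

lemma goodPP_A_B (a b : ℝ) : Good (tA a b) (tB (a + 1) (b + 1)) := by
  have hsub := corner_sub_pp (A := tA a b) (B := tB (a+1) (b+1)) (Or.inl rfl) (Or.inr (Or.inl rfl))
  exact Or.inl (inter_empty_left hsub (notmem_tA_tr a b))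

lemma goodPP_A_C (a b : ℝ) : Good (tA a b) (tC (a + 1) (b + 1)) := by
  have hsub := corner_sub_pp (A := tA a b) (B := tC (a+1) (b+1)) (Or.inl rfl) (Or.inr (Or.inr (Or.inl rfl)))
  exact Or.inl (inter_empty_left hsub (notmem_tA_tr a b))

lemma goodPP_A_D (a b : ℝ) : Good (tA a b) (tD (a + 1) (b + 1)) := by
  have hsub := corner_sub_pp (A := tA a b) (B := tD (a+1) (b+1)) (Or.inl rfl) (Or.inr (Or.inr (Or.inr rfl)))
  exact Or.inl (inter_empty_left hsub (notmem_tA_tr a b))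

lemma goodPP_B_A (a b : ℝ) : Good (tB a b) (tA (a + 1) (b + 1)) := by
  have hsub := corner_sub_pp (A := tB a b) (B := tA (a+1) (b+1)) (Or.inr (Or.inl rfl)) (Or.inl rfl)
  refine Or.inr (Or.inl ⟨_, vert_tB_tr a b, vert_tA_bl (a+1) (b+1), ?_⟩)
  apply inter_singleton_of hsub
  · exact (corner_mem_tB a b).2.2
  · exact (corner_mem_tA (a+1) (b+1)).1

lemma goodPP_B_B (a b : ℝ) : Good (tB a b) (tB (a + 1) (b + 1)) := by
  have hsub := corner_sub_pp (A := tB a b) (B := tB (a+1) (b+1)) (Or.inr (Or.inl rfl)) (Or.inr (Or.inl rfl))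
  refine Or.inr (Or.inl ⟨_, vert_tB_tr a b, vert_tB_bl (a+1) (b+1), ?_⟩)
  apply inter_singleton_of hsub
  · exact (corner_mem_tB a b).2.2
  · exact (corner_mem_tB (a+1) (b+1)).1

lemma goodPP_B_C (a b : ℝ) : Good (tB a b) (tC (a + 1) (b + 1)) := by
  have hsub := corner_sub_pp (A := tB a b) (B := tC (a+1) (b+1)) (Or.inr (Or.inl rfl)) (Or.inr (Or.inr (Or.inl rfl)))
  exact Or.inl (inter_empty_right hsub (notmem_tC_bl (a+1) (b+1)))

lemma goodPP_B_D (a b : ℝ) : Good (tB a b) (tD (a + 1) (b + 1)) := by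
  have hsub := corner_sub_pp (A := tB a b) (B := tD (a+1) (b+1)) (Or.inr (Or.inl rfl)) (Or.inr (Or.inr (Or.inr rfl)))
  refine Or.inr (Or.inl ⟨_, vert_tB_tr a b, vert_tD_bl (a+1) (b+1), ?_⟩)
  apply inter_singleton_of hsub
  · exact (corner_mem_tB a b).2.2
  · exact (corner_mem_tD (a+1) (b+1)).1

lemma goodPP_C_A (a b : ℝ) : Good (tC a b) (tA (a + 1) (b + 1)) := by
  have hsub := corner_sub_pp (A := tC a b) (B := tA (a+1) (b+1)) (Or.inr (Or.inr (Or.inl rfl))) (Or.inl rfl)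
  refine Or.inr (Or.inl ⟨_, vert_tC_tr a b, vert_tA_bl (a+1) (b+1), ?_⟩)
  apply inter_singleton_of hsub
  · exact (corner_mem_tC a b).2.2
  · exact (corner_mem_tA (a+1) (b+1)).1

lemma goodPP_C_B (a b : ℝ) : Good (tC a b) (tB (a + 1) (b + 1)) := by
  have hsub := corner_sub_pp (A := tC a b) (B := tB (a+1) (b+1)) (Or.inr (Or.inr (Or.inl rfl))) (Or.inr (Or.inl rfl))
  refine Or.inr (Or.inl ⟨_, vert_tC_tr a b, vert_tB_bl (a+1) (b+1), ?_⟩)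
  apply inter_singleton_of hsub
  · exact (corner_mem_tC a b).2.2
  · exact (corner_mem_tB (a+1) (b+1)).1

lemma goodPP_C_C (a b : ℝ) : Good (tC a b) (tC (a + 1) (b + 1)) := by
  have hsub := corner_sub_pp (A := tC a b) (B := tC (a+1) (b+1)) (Or.inr (Or.inr (Or.inl rfl))) (Or.inr (Or.inr (Or.inl rfl)))
  exact Or.inl (inter_empty_right hsub (notmem_tC_bl (a+1) (b+1)))

lemma goodPP_C_D (a b : ℝ) : Good (tC a b) (tD (a + 1) (b + 1)) := by
  have hsub := corner_sub_pp (A := tC a b) (B := tD (a+1) (b+1)) (Or.inr (Or.inr (Or.inl rfl))) (Or.inr (Or.inr (Or.inr rfl)))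
  refine Or.inr (Or.inl ⟨_, vert_tC_tr a b, vert_tD_bl (a+1) (b+1), ?_⟩)
  apply inter_singleton_of hsub
  · exact (corner_mem_tC a b).2.2
  · exact (corner_mem_tD (a+1) (b+1)).1

lemma goodPP_D_A (a b : ℝ) : Good (tD a b) (tA (a + 1) (b + 1)) := by
  have hsub := corner_sub_pp (A := tD a b) (B := tA (a+1) (b+1)) (Or.inr (Or.inr (Or.inr rfl))) (Or.inl rfl)
  refine Or.inr (Or.inl ⟨_, vert_tD_tr a b, vert_tA_bl (a+1) (b+1), ?_⟩)
  apply inter_singleton_of hsub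
  · exact (corner_mem_tD a b).2.2
  · exact (corner_mem_tA (a+1) (b+1)).1

lemma goodPP_D_B (a b : ℝ) : Good (tD a b) (tB (a + 1) (b + 1)) := by
  have hsub := corner_sub_pp (A := tD a b) (B := tB (a+1) (b+1)) (Or.inr (Or.inr (Or.inr rfl))) (Or.inr (Or.inl rfl))
  refine Or.inr (Or.inl ⟨_, vert_tD_tr a b, vert_tB_bl (a+1) (b+1), ?_⟩)
  apply inter_singleton_of hsub
  · exact (corner_mem_tD a b).2.2
  · exact (corner_mem_tB (a+1) (b+1)).1

lemma goodPP_D_C (a b : ℝ) : Good (tD a b) (tC (a + 1) (b + 1)) := by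
  have hsub := corner_sub_pp (A := tD a b) (B := tC (a+1) (b+1)) (Or.inr (Or.inr (Or.inr rfl))) (Or.inr (Or.inr (Or.inl rfl)))
  exact Or.inl (inter_empty_right hsub (notmem_tC_bl (a+1) (b+1)))

lemma goodPP_D_D (a b : ℝ) : Good (tD a b) (tD (a + 1) (b + 1)) := by
  have hsub := corner_sub_pp (A := tD a b) (B := tD (a+1) (b+1)) (Or.inr (Or.inr (Or.inr rfl))) (Or.inr (Or.inr (Or.inr rfl)))
  refine Or.inr (Or.inl ⟨_, vert_tD_tr a b, vert_tD_bl (a+1) (b+1), ?_⟩)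
  apply inter_singleton_of hsub
  · exact (corner_mem_tD a b).2.2
  · exact (corner_mem_tD (a+1) (b+1)).1

lemma goodPM_A_A (a b : ℝ) : Good (tA a b) (tA (a + 1) (b - 1)) := by
  have hsub := corner_sub_pm (A := tA a b) (B := tA (a+1) (b-1)) (Or.inl rfl) (Or.inl rfl)
  have e1 : ((b : ℝ) - 1) + 1 = b := by ring
  have hv := vert_tA_tl (a+1) (b-1)
  rw [e1] at hv
  have hm := (corner_mem_tA (a+1) (b-1)).2.2
  rw [e1] at hm
  refine Or.inr (Or.inl ⟨_, vert_tA_br a b, hv, ?_⟩)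
  apply inter_singleton_of hsub
  · exact (corner_mem_tA a b).2.1
  · exact hm

lemma goodPM_A_B (a b : ℝ) : Good (tA a b) (tB (a + 1) (b - 1)) := by
  have hsub := corner_sub_pm (A := tA a b) (B := tB (a+1) (b-1)) (Or.inl rfl) (Or.inr (Or.inl rfl))
  have e1 : ((b : ℝ) - 1) + 1 = b := by ring
  have h2 := notmem_tB_tl (a+1) (b-1)
  rw [e1] at h2
  exact Or.inl (inter_empty_right hsub h2)

lemma goodPM_A_C (a b : ℝ) : Good (tA a b) (tC (a + 1) (b - 1)) := by
  have hsub := corner_sub_pm (A := tA a b) (B := tC (a+1) (b-1)) (Or.inl rfl) (Or.inr (Or.inr (Or.inl rfl)))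
  have e1 : ((b : ℝ) - 1) + 1 = b := by ring
  have hv := vert_tC_tl (a+1) (b-1)
  rw [e1] at hv
  have hm := (corner_mem_tC (a+1) (b-1)).2.1
  rw [e1] at hm
  refine Or.inr (Or.inl ⟨_, vert_tA_br a b, hv, ?_⟩)
  apply inter_singleton_of hsub
  · exact (corner_mem_tA a b).2.1
  · exact hm

lemma goodPM_A_D (a b : ℝ) : Good (tA a b) (tD (a + 1) (b - 1)) := by
  have hsub := corner_sub_pm (A := tA a b) (B := tD (a+1) (b-1)) (Or.inl rfl) (Or.inr (Or.inr (Or.inr rfl)))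
  have e1 : ((b : ℝ) - 1) + 1 = b := by ring
  have hv := vert_tD_tl (a+1) (b-1)
  rw [e1] at hv
  have hm := (corner_mem_tD (a+1) (b-1)).2.1
  rw [e1] at hm
  refine Or.inr (Or.inl ⟨_, vert_tA_br a b, hv, ?_⟩)
  apply inter_singleton_of hsub
  · exact (corner_mem_tA a b).2.1
  · exact hm

lemma goodPM_B_A (a b : ℝ) : Good (tB a b) (tA (a + 1) (b - 1)) := by
  have hsub := corner_sub_pm (A := tB a b) (B := tA (a+1) (b-1)) (Or.inr (Or.inl rfl)) (Or.inl rfl)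
  have e1 : ((b : ℝ) - 1) + 1 = b := by ring
  have hv := vert_tA_tl (a+1) (b-1)
  rw [e1] at hv
  have hm := (corner_mem_tA (a+1) (b-1)).2.2
  rw [e1] at hm
  refine Or.inr (Or.inl ⟨_, vert_tB_br a b, hv, ?_⟩)
  apply inter_singleton_of hsub
  · exact (corner_mem_tB a b).2.1
  · exact hm

lemma goodPM_B_B (a b : ℝ) : Good (tB a b) (tB (a + 1) (b - 1)) := by
  have hsub := corner_sub_pm (A := tB a b) (B := tB (a+1) (b-1)) (Or.inr (Or.inl rfl)) (Or.inr (Or.inl rfl))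
  have e1 : ((b : ℝ) - 1) + 1 = b := by ring
  have h2 := notmem_tB_tl (a+1) (b-1)
  rw [e1] at h2
  exact Or.inl (inter_empty_right hsub h2)

lemma goodPM_B_C (a b : ℝ) : Good (tB a b) (tC (a + 1) (b - 1)) := by
  have hsub := corner_sub_pm (A := tB a b) (B := tC (a+1) (b-1)) (Or.inr (Or.inl rfl)) (Or.inr (Or.inr (Or.inl rfl)))
  have e1 : ((b : ℝ) - 1) + 1 = b := by ring
  have hv := vert_tC_tl (a+1) (b-1)
  rw [e1] at hv
  have hm := (corner_mem_tC (a+1) (b-1)).2.1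
  rw [e1] at hm
  refine Or.inr (Or.inl ⟨_, vert_tB_br a b, hv, ?_⟩)
  apply inter_singleton_of hsub
  · exact (corner_mem_tB a b).2.1
  · exact hm

lemma goodPM_B_D (a b : ℝ) : Good (tB a b) (tD (a + 1) (b - 1)) := by
  have hsub := corner_sub_pm (A := tB a b) (B := tD (a+1) (b-1)) (Or.inr (Or.inl rfl)) (Or.inr (Or.inr (Or.inr rfl)))
  have e1 : ((b : ℝ) - 1) + 1 = b := by ring
  have hv := vert_tD_tl (a+1) (b-1)
  rw [e1] at hv
  have hm := (corner_mem_tD (a+1) (b-1)).2.1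
  rw [e1] at hm
  refine Or.inr (Or.inl ⟨_, vert_tB_br a b, hv, ?_⟩)
  apply inter_singleton_of hsub
  · exact (corner_mem_tB a b).2.1
  · exact hm

lemma goodPM_C_A (a b : ℝ) : Good (tC a b) (tA (a + 1) (b - 1)) := by
  have hsub := corner_sub_pm (A := tC a b) (B := tA (a+1) (b-1)) (Or.inr (Or.inr (Or.inl rfl))) (Or.inl rfl)
  have e1 : ((b : ℝ) - 1) + 1 = b := by ring
  have hv := vert_tA_tl (a+1) (b-1)
  rw [e1] at hv
  have hm := (corner_mem_tA (a+1) (b-1)).2.2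
  rw [e1] at hm
  refine Or.inr (Or.inl ⟨_, vert_tC_br a b, hv, ?_⟩)
  apply inter_singleton_of hsub
  · exact (corner_mem_tC a b).1
  · exact hm

lemma goodPM_C_B (a b : ℝ) : Good (tC a b) (tB (a + 1) (b - 1)) := by
  have hsub := corner_sub_pm (A := tC a b) (B := tB (a+1) (b-1)) (Or.inr (Or.inr (Or.inl rfl))) (Or.inr (Or.inl rfl))
  have e1 : ((b : ℝ) - 1) + 1 = b := by ring
  have h2 := notmem_tB_tl (a+1) (b-1)
  rw [e1] at h2
  exact Or.inl (inter_empty_right hsub h2)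

lemma goodPM_C_C (a b : ℝ) : Good (tC a b) (tC (a + 1) (b - 1)) := by
  have hsub := corner_sub_pm (A := tC a b) (B := tC (a+1) (b-1)) (Or.inr (Or.inr (Or.inl rfl))) (Or.inr (Or.inr (Or.inl rfl)))
  have e1 : ((b : ℝ) - 1) + 1 = b := by ring
  have hv := vert_tC_tl (a+1) (b-1)
  rw [e1] at hv
  have hm := (corner_mem_tC (a+1) (b-1)).2.1
  rw [e1] at hm
  refine Or.inr (Or.inl ⟨_, vert_tC_br a b, hv, ?_⟩)
  apply inter_singleton_of hsub
  · exact (corner_mem_tC a b).1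
  · exact hm

lemma goodPM_C_D (a b : ℝ) : Good (tC a b) (tD (a + 1) (b - 1)) := by
  have hsub := corner_sub_pm (A := tC a b) (B := tD (a+1) (b-1)) (Or.inr (Or.inr (Or.inl rfl))) (Or.inr (Or.inr (Or.inr rfl)))
  have e1 : ((b : ℝ) - 1) + 1 = b := by ring
  have hv := vert_tD_tl (a+1) (b-1)
  rw [e1] at hv
  have hm := (corner_mem_tD (a+1) (b-1)).2.1
  rw [e1] at hm
  refine Or.inr (Or.inl ⟨_, vert_tC_br a b, hv, ?_⟩)
  apply inter_singleton_of hsub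
  · exact (corner_mem_tC a b).1
  · exact hm

lemma goodPM_D_A (a b : ℝ) : Good (tD a b) (tA (a + 1) (b - 1)) := by
  have hsub := corner_sub_pm (A := tD a b) (B := tA (a+1) (b-1)) (Or.inr (Or.inr (Or.inr rfl))) (Or.inl rfl)
  have e1 : ((b : ℝ) - 1) + 1 = b := by ring
  exact Or.inl (inter_empty_left hsub (notmem_tD_br a b))

lemma goodPM_D_B (a b : ℝ) : Good (tD a b) (tB (a + 1) (b - 1)) := by
  have hsub := corner_sub_pm (A := tD a b) (B := tB (a+1) (b-1)) (Or.inr (Or.inr (Or.inr rfl))) (Or.inr (Or.inl rfl))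
  have e1 : ((b : ℝ) - 1) + 1 = b := by ring
  exact Or.inl (inter_empty_left hsub (notmem_tD_br a b))

lemma goodPM_D_C (a b : ℝ) : Good (tD a b) (tC (a + 1) (b - 1)) := by
  have hsub := corner_sub_pm (A := tD a b) (B := tC (a+1) (b-1)) (Or.inr (Or.inr (Or.inr rfl))) (Or.inr (Or.inr (Or.inl rfl)))
  have e1 : ((b : ℝ) - 1) + 1 = b := by ring
  exact Or.inl (inter_empty_left hsub (notmem_tD_br a b))

lemma goodPM_D_D (a b : ℝ) : Good (tD a b) (tD (a + 1) (b - 1)) := by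
  have hsub := corner_sub_pm (A := tD a b) (B := tD (a+1) (b-1)) (Or.inr (Or.inr (Or.inr rfl))) (Or.inr (Or.inr (Or.inr rfl)))
  have e1 : ((b : ℝ) - 1) + 1 = b := by ring
  exact Or.inl (inter_empty_left hsub (notmem_tD_br a b))

lemma dirH {A B : Set (ℝ × ℝ)} {a b : ℝ} (hA : IsT A a b) (hB : IsT B (a + 1) b) : Good A B := by
  rcases hA with rfl | rfl | rfl | rfl <;> rcases hB with rfl | rfl | rfl | rfl
  exacts [goodH_A_A a b, goodH_A_B a b, goodH_A_C a b, goodH_A_D a b, goodH_B_A a b, goodH_B_B a b, goodH_B_C a b, goodH_B_D a b, goodH_C_A a b, goodH_C_B a b, goodH_C_C a b, goodH_C_D a b, goodH_D_A a b, goodH_D_B a b, goodH_D_C a b, goodH_D_D a b]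

lemma dirV {A B : Set (ℝ × ℝ)} {a b : ℝ} (hA : IsT A a b) (hB : IsT B a (b + 1)) : Good A B := by
  rcases hA with rfl | rfl | rfl | rfl <;> rcases hB with rfl | rfl | rfl | rfl
  exacts [goodV_A_A a b, goodV_A_B a b, goodV_A_C a b, goodV_A_D a b, goodV_B_A a b, goodV_B_B a b, goodV_B_C a b, goodV_B_D a b, goodV_C_A a b, goodV_C_B a b, goodV_C_C a b, goodV_C_D a b, goodV_D_A a b, goodV_D_B a b, goodV_D_C a b, goodV_D_D a b]

lemma dirPP {A B : Set (ℝ × ℝ)} {a b : ℝ} (hA : IsT A a b) (hB : IsT B (a + 1) (b + 1)) : Good A B := by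
  rcases hA with rfl | rfl | rfl | rfl <;> rcases hB with rfl | rfl | rfl | rfl
  exacts [goodPP_A_A a b, goodPP_A_B a b, goodPP_A_C a b, goodPP_A_D a b, goodPP_B_A a b, goodPP_B_B a b, goodPP_B_C a b, goodPP_B_D a b, goodPP_C_A a b, goodPP_C_B a b, goodPP_C_C a b, goodPP_C_D a b, goodPP_D_A a b, goodPP_D_B a b, goodPP_D_C a b, goodPP_D_D a b]

lemma dirPM {A B : Set (ℝ × ℝ)} {a b : ℝ} (hA : IsT A a b) (hB : IsT B (a + 1) (b - 1)) : Good A B := by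
  rcases hA with rfl | rfl | rfl | rfl <;> rcases hB with rfl | rfl | rfl | rfl
  exacts [goodPM_A_A a b, goodPM_A_B a b, goodPM_A_C a b, goodPM_A_D a b, goodPM_B_A a b, goodPM_B_B a b, goodPM_B_C a b, goodPM_B_D a b, goodPM_C_A a b, goodPM_C_B a b, goodPM_C_C a b, goodPM_C_D a b, goodPM_D_A a b, goodPM_D_B a b, goodPM_D_C a b, goodPM_D_D a b]


lemma d10 {A B : Set (ℝ × ℝ)} {a b c d : ℝ} (hA : IsT A a b) (hB : IsT B c d)
    (h1 : c = a + 1) (h2 : d = b) : Good A B := by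
  subst h1; subst h2; exact dirH hA hB
lemma dm10 {A B : Set (ℝ × ℝ)} {a b c d : ℝ} (hA : IsT A a b) (hB : IsT B c d)
    (h1 : a = c + 1) (h2 : b = d) : Good A B := by
  subst h1; subst h2; exact (dirH hB hA).symm
lemma d01 {A B : Set (ℝ × ℝ)} {a b c d : ℝ} (hA : IsT A a b) (hB : IsT B c d)
    (h1 : c = a) (h2 : d = b + 1) : Good A B := by
  subst h1; subst h2; exact dirV hA hB
lemma d0m1 {A B : Set (ℝ × ℝ)} {a b c d : ℝ} (hA : IsT A a b) (hB : IsT B c d)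
    (h1 : a = c) (h2 : b = d + 1) : Good A B := by
  subst h1; subst h2; exact (dirV hB hA).symm
lemma d11 {A B : Set (ℝ × ℝ)} {a b c d : ℝ} (hA : IsT A a b) (hB : IsT B c d)
    (h1 : c = a + 1) (h2 : d = b + 1) : Good A B := by
  subst h1; subst h2; exact dirPP hA hB
lemma dm1m1 {A B : Set (ℝ × ℝ)} {a b c d : ℝ} (hA : IsT A a b) (hB : IsT B c d)
    (h1 : a = c + 1) (h2 : b = d + 1) : Good A B := by
  subst h1; subst h2; exact (dirPP hB hA).symm
lemma d1m1 {A B : Set (ℝ × ℝ)} {a b c d : ℝ} (hA : IsT A a b) (hB : IsT B c d)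
    (h1 : c = a + 1) (h2 : d = b - 1) : Good A B := by
  subst h1; subst h2; exact dirPM hA hB
lemma dm11 {A B : Set (ℝ × ℝ)} {a b c d : ℝ} (hA : IsT A a b) (hB : IsT B c d)
    (h1 : a = c + 1) (h2 : b = d - 1) : Good A B := by
  subst h1; subst h2; exact (dirPM hB hA).symm

lemma far_inter {A B : Set (ℝ × ℝ)} {m n m' n' : ℤ}
    (hA : IsT A (m : ℝ) (n : ℝ)) (hB : IsT B (m' : ℝ) (n' : ℝ))
    (h : m + 2 ≤ m' ∨ m' + 2 ≤ m ∨ n + 2 ≤ n' ∨ n' + 2 ≤ n) : A ∩ B = ∅ := by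
  apply Set.eq_empty_iff_forall_notMem.mpr
  rintro p ⟨hpA, hpB⟩
  have s1 := sq_of_mem hA hpA
  have s2 := sq_of_mem hB hpB
  rcases h with h | h | h | h <;>
    (first
      | (have hr : (m : ℝ) + 2 ≤ (m' : ℝ) := by exact_mod_cast h
         linarith [s1.2.1, s2.1])
      | (have hr : (m' : ℝ) + 2 ≤ (m : ℝ) := by exact_mod_cast h
         linarith [s2.2.1, s1.1])
      | (have hr : (n : ℝ) + 2 ≤ (n' : ℝ) := by exact_mod_cast h
         linarith [s1.2.2.2, s2.2.2.1])
      | (have hr : (n' : ℝ) + 2 ≤ (n : ℝ) := by exact_mod_cast h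
         linarith [s2.2.2.2, s1.2.2.1]))


lemma d00 {A B : Set (ℝ × ℝ)} {a b : ℝ} (hA : IsT A a b) (hB : IsT B a b)
    (hpar : (A = tA a b ∨ A = tC a b) ↔ (B = tA a b ∨ B = tC a b))
    (hne : A ≠ B) : Good A B := by
  rcases hA with rfl | rfl | rfl | rfl <;> rcases hB with rfl | rfl | rfl | rfl
  · exact absurd rfl hne
  · rcases hpar.mp (Or.inl rfl) with h | h
    · exact False.elim (tA_ne_tB h.symm)
    · exact False.elim (tB_ne_tC h)
  · exact good_same_AC _ _
  · rcases hpar.mp (Or.inl rfl) with h | h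
    · exact False.elim (tA_ne_tD h.symm)
    · exact False.elim (tC_ne_tD h.symm)
  · rcases hpar.mpr (Or.inl rfl) with h | h
    · exact False.elim (tA_ne_tB h.symm)
    · exact False.elim (tB_ne_tC h)
  · exact absurd rfl hne
  · rcases hpar.mpr (Or.inr rfl) with h | h
    · exact False.elim (tA_ne_tB h.symm)
    · exact False.elim (tB_ne_tC h)
  · exact good_same_BD _ _
  · exact (good_same_AC _ _).symm
  · rcases hpar.mp (Or.inr rfl) with h | h
    · exact False.elim (tA_ne_tB h.symm)
    · exact False.elim (tB_ne_tC h)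
  · exact absurd rfl hne
  · rcases hpar.mp (Or.inr rfl) with h | h
    · exact False.elim (tA_ne_tD h.symm)
    · exact False.elim (tC_ne_tD h.symm)
  · rcases hpar.mpr (Or.inl rfl) with h | h
    · exact False.elim (tA_ne_tD h.symm)
    · exact False.elim (tC_ne_tD h.symm)
  · exact (good_same_BD _ _).symm
  · rcases hpar.mpr (Or.inr rfl) with h | h
    · exact False.elim (tA_ne_tD h.symm)
    · exact False.elim (tC_ne_tD h.symm)
  · exact absurd rfl hne

lemma good_int {A B : Set (ℝ × ℝ)} {m n m' n' : ℤ}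
    (hA : IsT A (m : ℝ) (n : ℝ)) (hB : IsT B (m' : ℝ) (n' : ℝ))
    (hpar : m = m' → n = n' →
      ((A = tA (m : ℝ) (n : ℝ) ∨ A = tC (m : ℝ) (n : ℝ)) ↔
       (B = tA (m : ℝ) (n : ℝ) ∨ B = tC (m : ℝ) (n : ℝ))))
    (hne : A ≠ B) : Good A B := by
  by_cases f1 : m + 2 ≤ m'
  · exact Or.inl (far_inter hA hB (Or.inl f1))
  by_cases f2 : m' + 2 ≤ m
  · exact Or.inl (far_inter hA hB (Or.inr (Or.inl f2)))
  by_cases f3 : n + 2 ≤ n'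
  · exact Or.inl (far_inter hA hB (Or.inr (Or.inr (Or.inl f3))))
  by_cases f4 : n' + 2 ≤ n
  · exact Or.inl (far_inter hA hB (Or.inr (Or.inr (Or.inr f4))))
  have h9 : (m' = m ∧ n' = n) ∨ (m' = m + 1 ∧ n' = n) ∨ (m = m' + 1 ∧ n' = n) ∨
      (m' = m ∧ n' = n + 1) ∨ (m' = m ∧ n = n' + 1) ∨
      (m' = m + 1 ∧ n' = n + 1) ∨ (m = m' + 1 ∧ n = n' + 1) ∨
      (m' = m + 1 ∧ n = n' + 1) ∨ (m = m' + 1 ∧ n' = n + 1) := by omega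
  rcases h9 with ⟨e1, e2⟩ | ⟨e1, e2⟩ | ⟨e1, e2⟩ | ⟨e1, e2⟩ | ⟨e1, e2⟩ | ⟨e1, e2⟩ | ⟨e1, e2⟩ |
    ⟨e1, e2⟩ | ⟨e1, e2⟩
  · subst e1; subst e2
    exact d00 hA hB (hpar rfl rfl) hne
  · exact d10 hA hB (by rw [e1]; push_cast; ring) (by rw [e2])
  · exact dm10 hA hB (by rw [e1]; push_cast; ring) (by rw [e2])
  · exact d01 hA hB (by rw [e1]) (by rw [e2]; push_cast; ring)
  · exact d0m1 hA hB (by rw [e1]) (by rw [e2]; push_cast; ring)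
  · exact d11 hA hB (by rw [e1]; push_cast; ring) (by rw [e2]; push_cast; ring)
  · exact dm1m1 hA hB (by rw [e1]; push_cast; ring) (by rw [e2]; push_cast; ring)
  · exact d1m1 hA hB (by rw [e1]; push_cast; ring) (by rw [e2]; push_cast; ring)
  · exact dm11 hA hB (by rw [e1]; push_cast; ring) (by rw [e2]; push_cast; ring)

-- interiors
lemma open_pert {p : ℝ × ℝ} {ε : ℝ} (hε : 0 < ε) (u w : ℝ) (hu : |u| < ε) (hw : |w| < ε) :
    (p.1 + u, p.2 + w) ∈ Metric.ball p ε := by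
  rw [Metric.mem_ball, Prod.dist_eq]
  apply max_lt <;> simp [Real.dist_eq, hu, hw]

lemma abs_half {ε : ℝ} (hε : 0 < ε) : |ε/2| < ε := by
  rw [abs_of_nonneg (by linarith)]; linarith
lemma abs_neg_half {ε : ℝ} (hε : 0 < ε) : |-(ε/2)| < ε := by
  rw [abs_neg]; exact abs_half hε
lemma abs_zero_lt {ε : ℝ} (hε : 0 < ε) : |(0 : ℝ)| < ε := by simpa

lemma interior_strict_tA {a b : ℝ} {p : ℝ × ℝ} (h : p ∈ interior (tA a b)) :
    a < p.1 ∧ b < p.2 ∧ p.1 + p.2 < a + b + 1 := by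
  rw [mem_interior_iff_mem_nhds, Metric.mem_nhds_iff] at h
  obtain ⟨ε, hε, hb⟩ := h
  have k1 := hb (open_pert hε (-(ε/2)) 0 (abs_neg_half hε) (abs_zero_lt hε))
  have k2 := hb (open_pert hε 0 (-(ε/2)) (abs_zero_lt hε) (abs_neg_half hε))
  have k3 := hb (open_pert hε (ε/2) 0 (abs_half hε) (abs_zero_lt hε))
  rw [mem_tA] at k1 k2 k3; dsimp only at k1 k2 k3
  exact ⟨by linarith [k1.1], by linarith [k2.2.1], by linarith [k3.2.2]⟩

lemma interior_strict_tB {a b : ℝ} {p : ℝ × ℝ} (h : p ∈ interior (tB a b)) :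
    p.1 < a + 1 ∧ b < p.2 ∧ p.2 - p.1 < b - a := by
  rw [mem_interior_iff_mem_nhds, Metric.mem_nhds_iff] at h
  obtain ⟨ε, hε, hb⟩ := h
  have k1 := hb (open_pert hε (ε/2) 0 (abs_half hε) (abs_zero_lt hε))
  have k2 := hb (open_pert hε 0 (-(ε/2)) (abs_zero_lt hε) (abs_neg_half hε))
  have k3 := hb (open_pert hε 0 (ε/2) (abs_zero_lt hε) (abs_half hε))
  rw [mem_tB] at k1 k2 k3; dsimp only at k1 k2 k3
  exact ⟨by linarith [k1.1], by linarith [k2.2.1], by linarith [k3.2.2]⟩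

lemma interior_strict_tC {a b : ℝ} {p : ℝ × ℝ} (h : p ∈ interior (tC a b)) :
    p.1 < a + 1 ∧ p.2 < b + 1 ∧ a + b + 1 < p.1 + p.2 := by
  rw [mem_interior_iff_mem_nhds, Metric.mem_nhds_iff] at h
  obtain ⟨ε, hε, hb⟩ := h
  have k1 := hb (open_pert hε (ε/2) 0 (abs_half hε) (abs_zero_lt hε))
  have k2 := hb (open_pert hε 0 (ε/2) (abs_zero_lt hε) (abs_half hε))
  have k3 := hb (open_pert hε (-(ε/2)) 0 (abs_neg_half hε) (abs_zero_lt hε))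
  rw [mem_tC] at k1 k2 k3; dsimp only at k1 k2 k3
  exact ⟨by linarith [k1.1], by linarith [k2.2.1], by linarith [k3.2.2]⟩

lemma interior_strict_tD {a b : ℝ} {p : ℝ × ℝ} (h : p ∈ interior (tD a b)) :
    a < p.1 ∧ p.2 < b + 1 ∧ p.1 - p.2 < a - b := by
  rw [mem_interior_iff_mem_nhds, Metric.mem_nhds_iff] at h
  obtain ⟨ε, hε, hb⟩ := h
  have k1 := hb (open_pert hε (-(ε/2)) 0 (abs_neg_half hε) (abs_zero_lt hε))
  have k2 := hb (open_pert hε 0 (ε/2) (abs_zero_lt hε) (abs_half hε))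
  have k3 := hb (open_pert hε (ε/2) 0 (abs_half hε) (abs_zero_lt hε))
  rw [mem_tD] at k1 k2 k3; dsimp only at k1 k2 k3
  exact ⟨by linarith [k1.1], by linarith [k2.2.1], by linarith [k3.2.2]⟩

lemma interior_sq {A : Set (ℝ × ℝ)} {a b : ℝ} {p : ℝ × ℝ} (hT : IsT A a b)
    (h : p ∈ interior A) : a < p.1 ∧ p.1 < a + 1 ∧ b < p.2 ∧ p.2 < b + 1 := by
  rcases hT with rfl | rfl | rfl | rfl
  · obtain ⟨s1, s2, s3⟩ := interior_strict_tA h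
    exact ⟨by linarith, by linarith, by linarith, by linarith⟩
  · obtain ⟨s1, s2, s3⟩ := interior_strict_tB h
    exact ⟨by linarith, by linarith, by linarith, by linarith⟩
  · obtain ⟨s1, s2, s3⟩ := interior_strict_tC h
    exact ⟨by linarith, by linarith, by linarith, by linarith⟩
  · obtain ⟨s1, s2, s3⟩ := interior_strict_tD h
    exact ⟨by linarith, by linarith, by linarith, by linarith⟩

lemma interior_empty_int {A B : Set (ℝ × ℝ)} {m n m' n' : ℤ}
    (hA : IsT A (m : ℝ) (n : ℝ)) (hB : IsT B (m' : ℝ) (n' : ℝ))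
    (hpar : m = m' → n = n' →
      ((A = tA (m : ℝ) (n : ℝ) ∨ A = tC (m : ℝ) (n : ℝ)) ↔
       (B = tA (m : ℝ) (n : ℝ) ∨ B = tC (m : ℝ) (n : ℝ))))
    (hne : A ≠ B) : interior A ∩ interior B = ∅ := by
  apply Set.eq_empty_iff_forall_notMem.mpr
  rintro p ⟨h1, h2⟩
  have s1 := interior_sq hA h1
  have s2 := interior_sq hB h2
  by_cases e : m = m' ∧ n = n'
  · obtain ⟨rfl, rfl⟩ := e
    have hp := hpar rfl rfl
    rcases hA with rfl | rfl | rfl | rfl <;> rcases hB with rfl | rfl | rfl | rfl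
    · exact hne rfl
    · rcases hp.mp (Or.inl rfl) with h | h
      · exact tA_ne_tB h.symm
      · exact tB_ne_tC h
    · obtain ⟨u1, u2, u3⟩ := interior_strict_tA h1
      obtain ⟨w1, w2, w3⟩ := interior_strict_tC h2
      linarith
    · rcases hp.mp (Or.inl rfl) with h | h
      · exact tA_ne_tD h.symm
      · exact tC_ne_tD h.symm
    · rcases hp.mpr (Or.inl rfl) with h | h
      · exact tA_ne_tB h.symm
      · exact tB_ne_tC h
    · exact hne rfl
    · rcases hp.mpr (Or.inr rfl) with h | h
      · exact tA_ne_tB h.symm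
      · exact tB_ne_tC h
    · obtain ⟨u1, u2, u3⟩ := interior_strict_tB h1
      obtain ⟨w1, w2, w3⟩ := interior_strict_tD h2
      linarith
    · obtain ⟨u1, u2, u3⟩ := interior_strict_tC h1
      obtain ⟨w1, w2, w3⟩ := interior_strict_tA h2
      linarith
    · rcases hp.mp (Or.inr rfl) with h | h
      · exact tA_ne_tB h.symm
      · exact tB_ne_tC h
    · exact hne rfl
    · rcases hp.mp (Or.inr rfl) with h | h
      · exact tA_ne_tD h.symm
      · exact tC_ne_tD h.symm
    · rcases hp.mpr (Or.inl rfl) with h | h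
      · exact tA_ne_tD h.symm
      · exact tC_ne_tD h.symm
    · obtain ⟨u1, u2, u3⟩ := interior_strict_tD h1
      obtain ⟨w1, w2, w3⟩ := interior_strict_tB h2
      linarith
    · rcases hp.mpr (Or.inr rfl) with h | h
      · exact tA_ne_tD h.symm
      · exact tC_ne_tD h.symm
    · exact hne rfl
  · have h4 : m + 1 ≤ m' ∨ m' + 1 ≤ m ∨ n + 1 ≤ n' ∨ n' + 1 ≤ n := by omega
    rcases h4 with h | h | h | h
    · have hr : (m : ℝ) + 1 ≤ (m' : ℝ) := by exact_mod_cast h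
      linarith [s1.2.1, s2.1]
    · have hr : (m' : ℝ) + 1 ≤ (m : ℝ) := by exact_mod_cast h
      linarith [s2.2.1, s1.1]
    · have hr : (n : ℝ) + 1 ≤ (n' : ℝ) := by exact_mod_cast h
      linarith [s1.2.2.2, s2.2.2.1]
    · have hr : (n' : ℝ) + 1 ≤ (n : ℝ) := by exact_mod_cast h
      linarith [s2.2.2.2, s1.2.2.1]

noncomputable def al : ℝ := Real.sqrt 2 - 1

lemma al_irr : Irrational al := by
  have := irrational_sqrt_two.sub_intCast 1
  simpa [al] using this

lemma al_pos : 0 < al := by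
  have h : (1:ℝ) < Real.sqrt 2 := by
    nlinarith [Real.sq_sqrt (by norm_num : (0:ℝ) ≤ 2), Real.sqrt_nonneg 2]
  simp only [al]; linarith

lemma al_lt_one : al < 1 := by
  have h : Real.sqrt 2 < 2 := by
    nlinarith [Real.sq_sqrt (by norm_num : (0:ℝ) ≤ 2), Real.sqrt_nonneg 2]
  simp only [al]; linarith

noncomputable def fl (m : ℤ) : ℤ := ⌊(m : ℝ) * al⌋

def J (m : ℤ) : Prop := fl (m + 1) = fl m

def Dd (m n : ℤ) : Prop := ¬(J m ↔ J n)

lemma fl_zero : fl 0 = 0 := by simp [fl]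

lemma jump_bounds (m : ℤ) : fl m ≤ fl (m + 1) ∧ fl (m + 1) ≤ fl m + 1 := by
  constructor
  · apply Int.floor_le_floor
    have : ((m : ℝ) + 1) * al = (m : ℝ) * al + al := by ring
    push_cast
    nlinarith [al_pos]
  · have h1 : ((m + 1 : ℤ) : ℝ) * al ≤ (m : ℝ) * al + 1 := by
      push_cast
      nlinarith [al_lt_one]
    calc fl (m + 1) ≤ ⌊(m : ℝ) * al + 1⌋ := Int.floor_le_floor h1
    _ = fl m + 1 := by rw [Int.floor_add_one]; rfl

lemma J_aperiodic (p : ℤ) (hp : p ≠ 0) (h : ∀ m, J (m + p) ↔ J m) : False := by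
  -- the difference fl (m + p) - fl m is constant
  have step : ∀ m : ℤ, fl (m + 1 + p) - fl (m + 1) = fl (m + p) - fl m := by
    intro m
    have h1 := jump_bounds m
    have h2 := jump_bounds (m + p)
    have h3 := h m
    unfold J at h3
    have e : m + 1 + p = m + p + 1 := by ring
    rw [e]
    by_cases hc : fl (m + 1) = fl m
    · have := h3.mpr hc; omega
    · have : ¬ fl (m + p + 1) = fl (m + p) := fun hx => hc (h3.mp hx)
      omega
  have const : ∀ m : ℤ, fl (m + p) - fl m = fl p := by
    intro m
    induction m using Int.induction_on with
    | zero => simp [fl_zero]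
    | succ k ih => rw [← ih]; exact step k
    | pred k ih =>
        have := step (-(k:ℤ) - 1)
        rw [show -(k:ℤ) - 1 + 1 = -(k:ℤ) by ring] at this
        rw [← ih, ← this]
  have mul : ∀ k : ℕ, fl (k * p) = k * fl p := by
    intro k
    induction k with
    | zero => simp [fl_zero]
    | succ k ih =>
        have hc := const ((k : ℤ) * p)
        have e1 : ((k + 1 : ℕ) : ℤ) * p = (k : ℤ) * p + p := by push_cast; ring
        have e2 : ((k + 1 : ℕ) : ℤ) * fl p = (k : ℤ) * fl p + fl p := by push_cast; ring
        rw [e1, e2, ← ih]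
        omega
  set θ : ℝ := (p : ℝ) * al - (fl p : ℝ) with hθ
  have hθ_irr : Irrational ((p : ℝ) * al) := by
    have := al_irr.intCast_mul hp
    exact this
  have hθ_ne : θ ≠ 0 := sub_ne_zero.mpr (hθ_irr.ne_int (fl p))
  have hθ_nonneg : 0 ≤ θ := by
    have h1 : (fl p : ℝ) ≤ (p : ℝ) * al := Int.floor_le _
    rw [hθ]; linarith
  have hθ_pos : 0 < θ := lt_of_le_of_ne hθ_nonneg (Ne.symm hθ_ne)
  obtain ⟨k, hk⟩ := exists_nat_gt (1 / θ)
  have hk1 : 1 < (k : ℝ) * θ := by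
    rw [div_lt_iff₀ hθ_pos] at hk
    linarith
  have hfloor : ((fl ((k : ℤ) * p) : ℝ)) ≤ ((k : ℤ) * p : ℤ) * al ∧
      (((k : ℤ) * p : ℤ) : ℝ) * al < (fl ((k : ℤ) * p) : ℝ) + 1 := by
    exact ⟨Int.floor_le _, Int.lt_floor_add_one _⟩
  have hmul := mul k
  have hcast : (((k : ℤ) * p : ℤ) : ℝ) * al = (k : ℝ) * ((p : ℝ) * al) := by push_cast; ring
  have : (k : ℝ) * θ < 1 := by
    have h2 := hfloor.2
    rw [hcast, hmul] at h2
    push_cast at h2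
    rw [hθ]
    nlinarith
  linarith

lemma Dd_kills {u v : ℤ} (h : ∀ m n : ℤ, Dd (m + u) (n + v) ↔ Dd m n) : u = 0 ∧ v = 0 := by
  have key : ∀ m n : ℤ, ((J (m + u) ↔ J m) ↔ (J (n + v) ↔ J n)) := by
    intro m n
    have := h m n
    unfold Dd at this
    tauto
  have hu : u = 0 := by
    by_contra hu
    by_cases hc : J (0 + u) ↔ J 0
    · have hall : ∀ m, J (m + u) ↔ J m := fun m => (key m 0).mpr ((key 0 0).mp hc)
      exact J_aperiodic u hu hall
    · have hm : ∀ m, ¬(J (m + u) ↔ J m) := fun m hcm => hc ((key 0 0).mpr ((key m 0).mp hcm))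
      have h2 : ∀ m, J (m + 2 * u) ↔ J m := by
        intro m
        have a1 := hm m
        have a2 := hm (m + u)
        rw [show m + 2 * u = m + u + u by ring]
        tauto
      exact J_aperiodic (2 * u) (by omega) h2
  subst hu
  have hv : v = 0 := by
    by_contra hv
    have hall : ∀ n, J (n + v) ↔ J n := by
      intro n
      exact (key 0 n).mp (by rw [zero_add])
    exact J_aperiodic v hv hall
  exact ⟨rfl, hv⟩

lemma fract_small : ∀ ε : ℝ, 0 < ε → ∃ a : ℤ, a ≠ 0 ∧ Int.fract ((a : ℝ) * al) < ε := by
  intro ε hε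
  obtain ⟨n, hn⟩ := exists_nat_gt (1 / ε)
  have hn0 : 0 < n := by
    by_contra h
    push_neg at h
    interval_cases n
    · simp at hn
      linarith [one_div_pos.mpr hε]
  obtain ⟨j, k, hk0, hkn, hap⟩ := Real.exists_int_int_abs_mul_sub_le al hn0
  have hlt : 1 / ((n : ℝ) + 1) < ε := by
    rw [div_lt_iff₀ (by positivity)]
    rw [div_lt_iff₀ hε] at hn
    nlinarith
  set θ : ℝ := (k : ℝ) * al - (j : ℝ) with hθ
  have hθ_ne : θ ≠ 0 := by
    have : Irrational ((k : ℝ) * al) := al_irr.intCast_mul (by omega)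
    exact sub_ne_zero.mpr (this.ne_int j)
  have habs : |θ| < ε := lt_of_le_of_lt hap hlt
  rcases lt_or_gt_of_ne hθ_ne with h | h
  · refine ⟨-k, by omega, ?_⟩
    have e1 : ((-k : ℤ) : ℝ) * al = (-j : ℤ) + (-θ) := by push_cast; rw [hθ]; ring
    rw [e1, Int.fract_intCast_add, Int.fract_eq_self.mpr ⟨by linarith, ?_⟩]
    · rw [abs_of_neg h] at habs; linarith
    · rw [abs_of_neg h] at habs
      have : ε ≤ 1 ∨ 1 < ε := le_or_gt ε 1
      have h1 : |θ| ≤ 1 / ((n:ℝ)+1) := hap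
      rw [abs_of_neg h] at h1
      have : (1:ℝ) / ((n:ℝ)+1) < 1 := by
        rw [div_lt_one (by positivity)]
        have : (1:ℝ) ≤ n := by exact_mod_cast hn0
        linarith
      linarith
  · refine ⟨k, by omega, ?_⟩
    have e1 : ((k : ℤ) : ℝ) * al = (j : ℤ) + θ := by push_cast; rw [hθ]; ring
    rw [e1, Int.fract_intCast_add, Int.fract_eq_self.mpr ⟨by linarith, ?_⟩]
    · rw [abs_of_pos h] at habs; linarith
    · have h1 : |θ| ≤ 1 / ((n:ℝ)+1) := hap
      rw [abs_of_pos h] at h1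
      have : (1:ℝ) / ((n:ℝ)+1) < 1 := by
        rw [div_lt_one (by positivity)]
        have : (1:ℝ) ≤ n := by exact_mod_cast hn0
        linarith
      linarith

lemma fract_big (ε : ℝ) (hε : 0 < ε) (M : ℕ) :
    ∃ a : ℤ, (M : ℤ) < |a| ∧ Int.fract ((a : ℝ) * al) < ε := by
  have hε' : 0 < min ε 1 / ((M : ℝ) + 1) := by positivity
  obtain ⟨a0, ha0, hfr⟩ := fract_small _ hε'
  refine ⟨((M : ℤ) + 1) * a0, ?_, ?_⟩
  · rw [abs_mul]
    have h1 : (1 : ℤ) ≤ |a0| := Int.one_le_abs ha0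
    have h2 : |(M : ℤ) + 1| = (M : ℤ) + 1 := abs_of_pos (by omega)
    nlinarith
  · have e1 : ((((M : ℤ) + 1) * a0 : ℤ) : ℝ) * al
        = (((M : ℤ) + 1) * ⌊(a0 : ℝ) * al⌋ : ℤ) + (((M : ℝ) + 1) * Int.fract ((a0 : ℝ) * al)) := by
      simp only [Int.fract]
      push_cast
      ring
    rw [e1, Int.fract_intCast_add, Int.fract_eq_self.mpr ⟨mul_nonneg (by positivity) (Int.fract_nonneg _), ?_⟩]
    · have hM1 : (0:ℝ) < (M : ℝ) + 1 := by positivity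
      have := mul_lt_mul_of_pos_left hfr hM1
      rw [mul_div_cancel₀] at this
      · calc ((M:ℝ)+1) * Int.fract ((a0 : ℝ) * al) < min ε 1 := this
        _ ≤ ε := min_le_left _ _
      · positivity
    · have hM1 : (0:ℝ) < (M : ℝ) + 1 := by positivity
      have := mul_lt_mul_of_pos_left hfr hM1
      rw [mul_div_cancel₀] at this
      · calc ((M:ℝ)+1) * Int.fract ((a0 : ℝ) * al) < min ε 1 := this
        _ ≤ 1 := min_le_right _ _
      · positivity

lemma window (N : ℕ) : ∃ ε : ℝ, 0 < ε ∧
    ∀ a : ℤ, Int.fract ((a : ℝ) * al) < ε → ∀ m : ℤ, |m| ≤ (N : ℤ) → (J (m + a) ↔ J m) := by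
  classical
  set W : Finset ℤ := Finset.Icc (-(N : ℤ) - 1) ((N : ℤ) + 1) with hW
  have hWne : W.Nonempty := ⟨0, by simp [hW]; omega⟩
  set s : ℝ := W.sup' hWne (fun m => Int.fract ((m : ℝ) * al)) with hs
  have hs1 : s < 1 := by
    rw [hs, Finset.sup'_lt_iff]
    intro m _
    exact Int.fract_lt_one _
  refine ⟨1 - s, by linarith, ?_⟩
  intro a ha m hm
  have key : ∀ m' : ℤ, m' ∈ W → fl (m' + a) = fl m' + fl a := by
    intro m' hm'
    have hle := Finset.le_sup' (fun m : ℤ => Int.fract ((m : ℝ) * al)) hm'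
    rw [← hs] at hle
    have e : ((m' + a : ℤ) : ℝ) * al
        = ((fl m' + fl a : ℤ) : ℝ) + (Int.fract ((m' : ℝ) * al) + Int.fract ((a : ℝ) * al)) := by
      simp only [fl, Int.fract]
      push_cast
      ring
    unfold fl
    rw [e, Int.floor_intCast_add]
    have h0 : ⌊Int.fract ((m' : ℝ) * al) + Int.fract ((a : ℝ) * al)⌋ = 0 := by
      rw [Int.floor_eq_zero_iff]
      constructor
      · exact add_nonneg (Int.fract_nonneg _) (Int.fract_nonneg _)
      · linarith
    simp only [fl]
    omega
  have hm2 := abs_le.mp hm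
  have k1 : fl (m + a) = fl m + fl a := key m (by simp [hW]; omega)
  have k2 : fl (m + 1 + a) = fl (m + 1) + fl a := key (m + 1) (by simp [hW]; omega)
  unfold J
  rw [show m + a + 1 = m + 1 + a by ring, k1, k2]
  omega

def RepT (S : Set (ℝ × ℝ)) (m n : ℤ) : Prop :=
  (¬ Dd m n ∧ (S = tA (m : ℝ) (n : ℝ) ∨ S = tC (m : ℝ) (n : ℝ))) ∨
  (Dd m n ∧ (S = tB (m : ℝ) (n : ℝ) ∨ S = tD (m : ℝ) (n : ℝ)))

noncomputable def Fam : Set (Set (ℝ × ℝ)) := {S | ∃ m n : ℤ, RepT S m n}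

lemma rep_IsT {S : Set (ℝ × ℝ)} {m n : ℤ} (h : RepT S m n) : IsT S (m : ℝ) (n : ℝ) := by
  rcases h with ⟨_, h | h⟩ | ⟨_, h | h⟩
  · exact Or.inl h
  · exact Or.inr (Or.inr (Or.inl h))
  · exact Or.inr (Or.inl h)
  · exact Or.inr (Or.inr (Or.inr h))

lemma not_AC_of_BD {S : Set (ℝ × ℝ)} {a b : ℝ} (h : S = tB a b ∨ S = tD a b) :
    ¬(S = tA a b ∨ S = tC a b) := by
  rcases h with rfl | rfl <;> rintro (h | h)
  · exact tA_ne_tB h.symm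
  · exact tB_ne_tC h
  · exact tA_ne_tD h.symm
  · exact tC_ne_tD h.symm

lemma rep_hpar {S S' : Set (ℝ × ℝ)} {m n : ℤ} (h : RepT S m n) (h' : RepT S' m n) :
    (S = tA (m : ℝ) (n : ℝ) ∨ S = tC (m : ℝ) (n : ℝ)) ↔
    (S' = tA (m : ℝ) (n : ℝ) ∨ S' = tC (m : ℝ) (n : ℝ)) := by
  rcases h with ⟨hd, hS⟩ | ⟨hd, hS⟩ <;> rcases h' with ⟨hd', hS'⟩ | ⟨hd', hS'⟩
  · exact iff_of_true hS hS'
  · exact absurd hd' hd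
  · exact absurd hd hd'
  · exact iff_of_false (not_AC_of_BD hS) (not_AC_of_BD hS')

lemma translate_tA_int (a b m n : ℤ) :
    translateSet ((a : ℝ), (b : ℝ)) (tA (m : ℝ) (n : ℝ)) = tA ((m + a : ℤ) : ℝ) ((n + b : ℤ) : ℝ) := by
  rw [translate_tA]; congr 1 <;> push_cast <;> ring
lemma translate_tB_int (a b m n : ℤ) :
    translateSet ((a : ℝ), (b : ℝ)) (tB (m : ℝ) (n : ℝ)) = tB ((m + a : ℤ) : ℝ) ((n + b : ℤ) : ℝ) := by
  rw [translate_tB]; congr 1 <;> push_cast <;> ring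
lemma translate_tC_int (a b m n : ℤ) :
    translateSet ((a : ℝ), (b : ℝ)) (tC (m : ℝ) (n : ℝ)) = tC ((m + a : ℤ) : ℝ) ((n + b : ℤ) : ℝ) := by
  rw [translate_tC]; congr 1 <;> push_cast <;> ring
lemma translate_tD_int (a b m n : ℤ) :
    translateSet ((a : ℝ), (b : ℝ)) (tD (m : ℝ) (n : ℝ)) = tD ((m + a : ℤ) : ℝ) ((n + b : ℤ) : ℝ) := by
  rw [translate_tD]; congr 1 <;> push_cast <;> ring

noncomputable def enum4 : (ℤ × ℤ) × Fin 4 → Set (ℝ × ℝ) := fun q =>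
  if q.2 = 0 then tA (q.1.1 : ℝ) (q.1.2 : ℝ)
  else if q.2 = 1 then tB (q.1.1 : ℝ) (q.1.2 : ℝ)
  else if q.2 = 2 then tC (q.1.1 : ℝ) (q.1.2 : ℝ)
  else tD (q.1.1 : ℝ) (q.1.2 : ℝ)

lemma Fam_countable : Fam.Countable := by
  apply Set.Countable.mono _ (Set.countable_range enum4)
  rintro S ⟨m, n, hrep⟩
  rcases hrep with ⟨_, rfl | rfl⟩ | ⟨_, rfl | rfl⟩
  · exact ⟨((m, n), 0), by simp [enum4]⟩
  · exact ⟨((m, n), 2), by simp [enum4]⟩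
  · exact ⟨((m, n), 1), by simp [enum4]⟩
  · exact ⟨((m, n), 3), by simp [enum4]⟩

lemma Fam_tiles : ∀ A ∈ Fam, ∃ k : ℤ, ∃ z : ℝ × ℝ, A = tile k z := by
  rintro A ⟨m, n, hrep⟩
  rcases hrep with ⟨_, rfl | rfl⟩ | ⟨_, rfl | rfl⟩
  · exact ⟨0, _, rfl⟩
  · exact ⟨2, _, rfl⟩
  · exact ⟨1, _, rfl⟩
  · exact ⟨3, _, rfl⟩

lemma Fam_covers : ⋃₀ Fam = Set.univ := by
  ext p
  simp only [Set.mem_sUnion, Set.mem_univ, iff_true]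
  have hm1 : ((⌊p.1⌋ : ℤ) : ℝ) ≤ p.1 := Int.floor_le _
  have hm2 : p.1 < ((⌊p.1⌋ : ℤ) : ℝ) + 1 := Int.lt_floor_add_one _
  have hn1 : ((⌊p.2⌋ : ℤ) : ℝ) ≤ p.2 := Int.floor_le _
  have hn2 : p.2 < ((⌊p.2⌋ : ℤ) : ℝ) + 1 := Int.lt_floor_add_one _
  by_cases hd : Dd ⌊p.1⌋ ⌊p.2⌋
  · by_cases hc : p.1 - p.2 ≤ ((⌊p.1⌋ : ℤ) : ℝ) - ((⌊p.2⌋ : ℤ) : ℝ)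
    · refine ⟨tD ((⌊p.1⌋ : ℤ) : ℝ) ((⌊p.2⌋ : ℤ) : ℝ), ⟨⌊p.1⌋, ⌊p.2⌋, Or.inr ⟨hd, Or.inr rfl⟩⟩, ?_⟩
      rw [mem_tD]
      exact ⟨hm1, by linarith, hc⟩
    · refine ⟨tB ((⌊p.1⌋ : ℤ) : ℝ) ((⌊p.2⌋ : ℤ) : ℝ), ⟨⌊p.1⌋, ⌊p.2⌋, Or.inr ⟨hd, Or.inl rfl⟩⟩, ?_⟩
      rw [mem_tB]
      exact ⟨by linarith, hn1, by linarith⟩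
  · by_cases hc : p.1 + p.2 ≤ ((⌊p.1⌋ : ℤ) : ℝ) + ((⌊p.2⌋ : ℤ) : ℝ) + 1
    · refine ⟨tA ((⌊p.1⌋ : ℤ) : ℝ) ((⌊p.2⌋ : ℤ) : ℝ), ⟨⌊p.1⌋, ⌊p.2⌋, Or.inl ⟨hd, Or.inl rfl⟩⟩, ?_⟩
      rw [mem_tA]
      exact ⟨hm1, hn1, hc⟩
    · refine ⟨tC ((⌊p.1⌋ : ℤ) : ℝ) ((⌊p.2⌋ : ℤ) : ℝ), ⟨⌊p.1⌋, ⌊p.2⌋, Or.inl ⟨hd, Or.inr rfl⟩⟩, ?_⟩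
      rw [mem_tC]
      exact ⟨by linarith, by linarith, by linarith⟩

lemma Fam_interiors : ∀ A ∈ Fam, ∀ B ∈ Fam, A ≠ B → interior A ∩ interior B = ∅ := by
  rintro A ⟨m, n, hrA⟩ B ⟨m', n', hrB⟩ hne
  refine interior_empty_int (rep_IsT hrA) (rep_IsT hrB) ?_ hne
  rintro rfl rfl
  exact rep_hpar hrA hrB

lemma Fam_edge : EdgeToEdge Fam := by
  rintro A ⟨m, n, hrA⟩ B ⟨m', n', hrB⟩ hne
  refine good_int (rep_IsT hrA) (rep_IsT hrB) ?_ hne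
  rintro rfl rfl
  exact rep_hpar hrA hrB

lemma Fam_aperiodic : ∀ v : ℝ × ℝ, IsPeriod v Fam → v = 0 := by
  intro v hper
  have hmem : ∀ S ∈ Fam, translateSet v S ∈ Fam := by
    intro S hS
    rw [IsPeriod] at hper
    rw [← hper]
    exact Set.mem_image_of_mem _ hS
  have hD00 : ¬ Dd 0 0 := fun hd => hd Iff.rfl
  have h0 : tA ((0 : ℤ) : ℝ) ((0 : ℤ) : ℝ) ∈ Fam := ⟨0, 0, Or.inl ⟨hD00, Or.inl rfl⟩⟩
  obtain ⟨m0, n0, hrep0⟩ := hmem _ h0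
  have hIsT1 : IsT (translateSet v (tA ((0 : ℤ) : ℝ) ((0 : ℤ) : ℝ)))
      (((0 : ℤ) : ℝ) + v.1) (((0 : ℤ) : ℝ) + v.2) := Or.inl (translate_tA v _ _)
  have hIsT2 := rep_IsT hrep0
  obtain ⟨e1, e2⟩ := IsT_params hIsT1 hIsT2
  have hv1 : v.1 = (m0 : ℝ) := by push_cast at e1; linarith
  have hv2 : v.2 = (n0 : ℝ) := by push_cast at e2; linarith
  have hv : v = ((m0 : ℝ), (n0 : ℝ)) := Prod.ext hv1 hv2
  have hish : ∀ m n : ℤ, Dd m n → Dd (m + m0) (n + n0) := by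
    intro m n hd
    have hmem2 := hmem _ (⟨m, n, Or.inr ⟨hd, Or.inl rfl⟩⟩ : tB (m : ℝ) (n : ℝ) ∈ Fam)
    rw [hv, translate_tB_int] at hmem2
    obtain ⟨m', n', hrep'⟩ := hmem2
    have i1 : IsT (tB ((m + m0 : ℤ) : ℝ) ((n + n0 : ℤ) : ℝ)) ((m + m0 : ℤ) : ℝ) ((n + n0 : ℤ) : ℝ) :=
      Or.inr (Or.inl rfl)
    obtain ⟨e1, e2⟩ := IsT_params i1 (rep_IsT hrep')
    have em : m' = m + m0 := by exact_mod_cast e1.symm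
    have en : n' = n + n0 := by exact_mod_cast e2.symm
    subst em; subst en
    rcases hrep' with ⟨hd', hAC⟩ | ⟨hd', _⟩
    · exfalso
      rcases hAC with h | h
      · exact tA_ne_tB h.symm
      · exact tB_ne_tC h
    · exact hd'
  have hish2 : ∀ m n : ℤ, ¬ Dd m n → ¬ Dd (m + m0) (n + n0) := by
    intro m n hd
    have hmem2 := hmem _ (⟨m, n, Or.inl ⟨hd, Or.inl rfl⟩⟩ : tA (m : ℝ) (n : ℝ) ∈ Fam)
    rw [hv, translate_tA_int] at hmem2
    obtain ⟨m', n', hrep'⟩ := hmem2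
    have i1 : IsT (tA ((m + m0 : ℤ) : ℝ) ((n + n0 : ℤ) : ℝ)) ((m + m0 : ℤ) : ℝ) ((n + n0 : ℤ) : ℝ) :=
      Or.inl rfl
    obtain ⟨e1, e2⟩ := IsT_params i1 (rep_IsT hrep')
    have em : m' = m + m0 := by exact_mod_cast e1.symm
    have en : n' = n + n0 := by exact_mod_cast e2.symm
    subst em; subst en
    rcases hrep' with ⟨hd', _⟩ | ⟨hd', hBD⟩
    · exact hd'
    · exfalso
      rcases hBD with h | h
      · exact tA_ne_tB h
      · exact tA_ne_tD h
  have hiff : ∀ m n : ℤ, Dd (m + m0) (n + n0) ↔ Dd m n := by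
    intro m n
    constructor
    · intro h
      by_contra hn
      exact hish2 m n hn h
    · exact hish m n
  obtain ⟨ha, hb⟩ := Dd_kills hiff
  rw [hv, ha, hb]
  simp

lemma Fam_repetitive : ∀ P ⊆ Fam, P.Finite →
    {v : ℝ × ℝ | translateSet v '' P ⊆ Fam}.Infinite := by
  intro P hPF hPfin
  have hex : ∀ A : Set (ℝ × ℝ), ∃ c : ℤ × ℤ, A ∈ P → RepT A c.1 c.2 := by
    intro A
    by_cases hA : A ∈ P
    · obtain ⟨m, n, h⟩ := hPF hA
      exact ⟨(m, n), fun _ => h⟩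
    · exact ⟨(0, 0), fun h => absurd h hA⟩
  choose rep hrep using hex
  obtain ⟨N, hN⟩ : ∃ N : ℕ, ∀ A ∈ P, (rep A).1.natAbs ≤ N ∧ (rep A).2.natAbs ≤ N := by
    obtain ⟨N, hNb⟩ := (hPfin.image (fun A => (rep A).1.natAbs ⊔ (rep A).2.natAbs)).bddAbove
    refine ⟨N, fun A hA => ?_⟩
    have h1 := hNb (Set.mem_image_of_mem _ hA)
    exact ⟨le_trans (le_max_left _ _) h1, le_trans (le_max_right _ _) h1⟩
  obtain ⟨ε, hε, hwin⟩ := window N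
  have hsub : ∀ a : ℤ, Int.fract ((a : ℝ) * al) < ε →
      ((a : ℝ), (a : ℝ)) ∈ {v : ℝ × ℝ | translateSet v '' P ⊆ Fam} := by
    intro a ha
    rintro X ⟨A, hAP, rfl⟩
    have hR := hrep A hAP
    obtain ⟨hN1, hN2⟩ := hN A hAP
    have hJm : J ((rep A).1 + a) ↔ J (rep A).1 := hwin a ha _
      (by rw [Int.abs_eq_natAbs]; exact_mod_cast hN1)
    have hJn : J ((rep A).2 + a) ↔ J (rep A).2 := hwin a ha _
      (by rw [Int.abs_eq_natAbs]; exact_mod_cast hN2)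
    have hDd : Dd ((rep A).1 + a) ((rep A).2 + a) ↔ Dd (rep A).1 (rep A).2 := by
      unfold Dd; tauto
    generalize hq : rep A = q at hR hDd
    rcases hR with ⟨hd, hAC⟩ | ⟨hd, hBD⟩
    · refine ⟨q.1 + a, q.2 + a, Or.inl ⟨fun h => hd (hDd.mp h), ?_⟩⟩
      rcases hAC with h | h
      · exact Or.inl (by rw [h]; exact translate_tA_int a a _ _)
      · exact Or.inr (by rw [h]; exact translate_tC_int a a _ _)
    · refine ⟨q.1 + a, q.2 + a, Or.inr ⟨hDd.mpr hd, ?_⟩⟩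
      rcases hBD with h | h
      · exact Or.inl (by rw [h]; exact translate_tB_int a a _ _)
      · exact Or.inr (by rw [h]; exact translate_tD_int a a _ _)
  have hTinf : {a : ℤ | Int.fract ((a : ℝ) * al) < ε}.Infinite := by
    by_contra hfin
    rw [Set.not_infinite] at hfin
    obtain ⟨M, hM⟩ := (hfin.image (fun a : ℤ => a.natAbs)).bddAbove
    obtain ⟨a, haM, hafr⟩ := fract_big ε hε M
    have h1 : a.natAbs ≤ M := hM (Set.mem_image_of_mem _ hafr)
    rw [Int.abs_eq_natAbs] at haM
    omega
  apply Set.Infinite.mono (s := (fun a : ℤ => ((a : ℝ), (a : ℝ))) '' {a : ℤ | Int.fract ((a : ℝ) * al) < ε})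
  · rintro v ⟨a, ha, rfl⟩
    exact hsub a ha
  · apply Set.Infinite.image _ hTinf
    intro x _ y _ hxy
    have : (x : ℝ) = (y : ℝ) := congrArg Prod.fst hxy
    exact_mod_cast this


/-- There is an edge-to-edge tiling of the plane by rotated translates of the
isosceles right triangle `T₀` (rotations by integer multiples of π/2 only, no
reflections) that has no nonzero translation period, yet in which every finite
patch recurs at infinitely many translations. -/
theorem exists_aperiodic_repetitive_one_triangle_tiling :
    ∃ F : Set (Set (ℝ × ℝ)),
      F.Countable ∧
      (∀ A ∈ F, ∃ k : ℤ, ∃ z : ℝ × ℝ, A = tile k z) ∧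
      ⋃₀ F = Set.univ ∧
      (∀ A ∈ F, ∀ B ∈ F, A ≠ B → interior A ∩ interior B = ∅) ∧
      EdgeToEdge F ∧
      (∀ v : ℝ × ℝ, IsPeriod v F → v = 0) ∧
      (∀ P ⊆ F, P.Finite → {v : ℝ × ℝ | translateSet v '' P ⊆ F}.Infinite) := by
  exact ⟨Fam, Fam_countable, Fam_tiles, Fam_covers, Fam_interiors, Fam_edge, Fam_aperiodic,
    Fam_repetitive⟩
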